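/- Let G be a finite simple graph, k an integer with k ≥ χ'(G), and let φ be an optimal edge-k-coloring of G, that is, an edge-k-coloring minimizing the sum over all subsets S ⊆ {1,…,k} of (n_φ^S)², where n_φ^S is the number of vertices of G whose color-set under φ equals S. Then |n_φ^S − n_φ^{S'}| ≤ 2 for all subsets S, S' ⊆ {1,…,k} with |S| = |S'|. -/

import Mathlib

/-- `φ` is a proper edge-`k`-coloring of `G`: every edge gets a color in `{1,…,k}` and
adjacent (distinct, sharing a vertex) edges get different colors. -/
def IsEdgeKColoring {V : Type*} (G : SimpleGraph V) (k : ℕ) (φ : Sym2 V → ℕ) : Prop :=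
  (∀ e ∈ G.edgeSet, φ e ∈ Finset.Icc 1 k) ∧
  ∀ e₁ ∈ G.edgeSet, ∀ e₂ ∈ G.edgeSet, e₁ ≠ e₂ → (∃ v : V, v ∈ e₁ ∧ v ∈ e₂) → φ e₁ ≠ φ e₂

/-- The color-set of a vertex `v`: the set of colors appearing on edges incident with `v`. -/
def colorSet {V : Type*} (G : SimpleGraph V) (φ : Sym2 V → ℕ) (v : V) : Set ℕ :=
  {c | ∃ e ∈ G.edgeSet, v ∈ e ∧ φ e = c}

/-- The chromatic index: the least `k` for which `G` has a proper edge-`k`-coloring. -/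
noncomputable def edgeChromaticIndex {V : Type*} (G : SimpleGraph V) : ℕ :=
  sInf {k | ∃ φ : Sym2 V → ℕ, IsEdgeKColoring G k φ}

/-- `n_φ^S`: the number of vertices whose color-set under `φ` is `S`. -/
noncomputable def nColorSet {V : Type*} (G : SimpleGraph V) (φ : Sym2 V → ℕ) (S : Set ℕ) : ℕ :=
  {v : V | colorSet G φ v = S}.ncard

/-- `∑_{S ⊆ {1,…,k}} (n_φ^S)²`, the quantity minimized by an optimal edge-`k`-coloring. -/
noncomputable def colSum {V : Type*} (G : SimpleGraph V) (k : ℕ) (φ : Sym2 V → ℕ) : ℕ :=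
  ∑ S ∈ (Finset.Icc 1 k).powerset, (nColorSet G φ (↑S : Set ℕ)) ^ 2

set_option linter.unusedSectionVars false
set_option linter.unusedVariables false

namespace BKLS
open Relation

variable {V : Type*} [Fintype V] {G : SimpleGraph V} {k : ℕ}

/-- optimal proper edge-k-coloring -/
def Opt (G : SimpleGraph V) (k : ℕ) (ψ : Sym2 V → ℕ) : Prop :=
  IsEdgeKColoring G k ψ ∧
    ∀ χ : Sym2 V → ℕ, IsEdgeKColoring G k χ → colSum G k ψ ≤ colSum G k χ

/-- edges of the (a,b)-subgraph -/
def FE (G : SimpleGraph V) (ψ : Sym2 V → ℕ) (a b : ℕ) (e : Sym2 V) : Prop :=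
  e ∈ G.edgeSet ∧ (ψ e = a ∨ ψ e = b)

/-- two sym2's share a vertex -/
def adjE (e f : Sym2 V) : Prop := ∃ v : V, v ∈ e ∧ v ∈ f

/-- v is an endpoint vertex of the (a,b)-subgraph: it lies on exactly one F-edge -/
def EndptV (G : SimpleGraph V) (ψ : Sym2 V → ℕ) (a b : ℕ) (v : V) : Prop :=
  ∃! e : Sym2 V, FE G ψ a b e ∧ v ∈ e

section Basic

variable {ψ : Sym2 V → ℕ} {a b : ℕ}

lemma mem_colorSet_iff {v : V} {c : ℕ} :
    c ∈ colorSet G ψ v ↔ ∃ e ∈ G.edgeSet, v ∈ e ∧ ψ e = c := Iff.rfl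

lemma colorSet_subset_Icc (hψ : IsEdgeKColoring G k ψ) (v : V) :
    colorSet G ψ v ⊆ ↑(Finset.Icc 1 k) := by
  rintro c ⟨e, he, -, rfl⟩
  exact_mod_cast hψ.1 e he

/-- two distinct F-edges at a vertex have the two colors a and b -/
lemma two_edges_colors (hψ : IsEdgeKColoring G k ψ) {v : V} {e f : Sym2 V}
    (he : FE G ψ a b e) (hf : FE G ψ a b f) (hne : e ≠ f) (hve : v ∈ e) (hvf : v ∈ f) :
    (ψ e = a ∧ ψ f = b) ∨ (ψ e = b ∧ ψ f = a) := by
  have hcol := hψ.2 e he.1 f hf.1 hne ⟨v, hve, hvf⟩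
  rcases he.2 with h1 | h1 <;> rcases hf.2 with h2 | h2 <;>
    simp only [h1, h2] at hcol ⊢ <;> tauto

/-- there cannot be three distinct F-edges at a vertex -/
lemma deg_le_two (hψ : IsEdgeKColoring G k ψ) (hab : a ≠ b) {v : V} {e f g : Sym2 V}
    (he : FE G ψ a b e) (hf : FE G ψ a b f) (hg : FE G ψ a b g)
    (hve : v ∈ e) (hvf : v ∈ f) (hvg : v ∈ g)
    (hef : e ≠ f) (heg : e ≠ g) (hfg : f ≠ g) : False := by
  rcases two_edges_colors hψ he hf hef hve hvf with ⟨h1, h2⟩ | ⟨h1, h2⟩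
  · rcases two_edges_colors hψ he hg heg hve hvg with ⟨-, h4⟩ | ⟨h3, -⟩
    · exact hψ.2 f hf.1 g hg.1 hfg ⟨v, hvf, hvg⟩ (h2.trans h4.symm)
    · exact hab (h1.symm.trans h3)
  · rcases two_edges_colors hψ he hg heg hve hvg with ⟨h3, -⟩ | ⟨-, h4⟩
    · exact hab (h3.symm.trans h1)
    · exact hψ.2 f hf.1 g hg.1 hfg ⟨v, hvf, hvg⟩ (h2.trans h4.symm)

lemma mem_colorSet_a_iff {v : V} (hab : a ≠ b) :
    a ∈ colorSet G ψ v ↔ ∃ e, FE G ψ a b e ∧ v ∈ e ∧ ψ e = a := by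
  constructor
  · rintro ⟨e, he, hv, hc⟩; exact ⟨e, ⟨he, Or.inl hc⟩, hv, hc⟩
  · rintro ⟨e, he, hv, hc⟩; exact ⟨e, he.1, hv, hc⟩

/-- characterization: v is an endpoint vertex iff exactly one of a, b is in its color set -/
lemma endptV_iff (hψ : IsEdgeKColoring G k ψ) (hab : a ≠ b) (v : V) :
    EndptV G ψ a b v ↔
      ((a ∈ colorSet G ψ v ∧ b ∉ colorSet G ψ v) ∨
       (b ∈ colorSet G ψ v ∧ a ∉ colorSet G ψ v)) := by
  constructor
  · rintro ⟨e, ⟨⟨heG, hcol⟩, hve⟩, huniq⟩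
    rcases hcol with hc | hc
    · left
      refine ⟨⟨e, heG, hve, hc⟩, ?_⟩
      rintro ⟨f, hfG, hvf, hfc⟩
      have : f = e := huniq f ⟨⟨hfG, Or.inr hfc⟩, hvf⟩
      exact hab (hc ▸ this ▸ hfc)
    · right
      refine ⟨⟨e, heG, hve, hc⟩, ?_⟩
      rintro ⟨f, hfG, hvf, hfc⟩
      have hfe : f = e := huniq f ⟨⟨hfG, Or.inl hfc⟩, hvf⟩
      rw [hfe] at hfc
      exact hab (hfc.symm.trans hc)
  · rintro (⟨⟨e, heG, hve, hce⟩, hnb⟩ | ⟨⟨e, heG, hve, hce⟩, hnb⟩)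
    · refine ⟨e, ⟨⟨heG, Or.inl hce⟩, hve⟩, ?_⟩
      rintro f ⟨⟨hfG, hfc | hfc⟩, hvf⟩
      · by_contra hne
        rcases two_edges_colors hψ (a := a) (b := b) ⟨hfG, Or.inl hfc⟩ ⟨heG, Or.inl hce⟩ hne hvf hve with
          ⟨-, h2⟩ | ⟨h1, -⟩
        · exact hab (hce.symm.trans h2)
        · exact hab (hfc.symm.trans h1)
      · exact absurd ⟨f, hfG, hvf, hfc⟩ hnb
    · refine ⟨e, ⟨⟨heG, Or.inr hce⟩, hve⟩, ?_⟩
      rintro f ⟨⟨hfG, hfc | hfc⟩, hvf⟩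
      · exact absurd ⟨f, hfG, hvf, hfc⟩ hnb
      · by_contra hne
        rcases two_edges_colors hψ (a := a) (b := b) ⟨hfG, Or.inr hfc⟩ ⟨heG, Or.inr hce⟩ hne hvf hve with
          ⟨h1, -⟩ | ⟨-, h2⟩
        · exact hab (hfc.symm.trans h1).symm
        · exact hab (hce.symm.trans h2).symm

/-- a touched non-endpoint vertex has both colors -/
lemma both_colors_of_touched_not_endpt (hψ : IsEdgeKColoring G k ψ) (hab : a ≠ b) {v : V}
    {e : Sym2 V} (he : FE G ψ a b e) (hve : v ∈ e) (hnep : ¬ EndptV G ψ a b v) :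
    a ∈ colorSet G ψ v ∧ b ∈ colorSet G ψ v := by
  rw [endptV_iff hψ hab] at hnep
  push_neg at hnep
  have hone : a ∈ colorSet G ψ v ∨ b ∈ colorSet G ψ v := by
    rcases he.2 with hc | hc
    · exact Or.inl ⟨e, he.1, hve, hc⟩
    · exact Or.inr ⟨e, he.1, hve, hc⟩
  rcases hone with h | h
  · exact ⟨h, hnep.1 h⟩
  · exact ⟨hnep.2 h, h⟩

end Basic
end BKLS
namespace BKLS
section Comp

variable {V : Type*} [Fintype V] {G : SimpleGraph V} {k : ℕ} {ψ : Sym2 V → ℕ} {a b : ℕ}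

/-- u is on an edge of A -/
def Touched (A : Set (Sym2 V)) (u : V) : Prop := ∃ e ∈ A, u ∈ e

/-- A is closed under F-adjacency -/
def ClosedF (G : SimpleGraph V) (ψ : Sym2 V → ℕ) (a b : ℕ) (A : Set (Sym2 V)) : Prop :=
  ∀ e ∈ A, ∀ f, FE G ψ a b f → adjE e f → f ∈ A

/-- A is a connected component of the (a,b)-subgraph which is a path from v to w -/
def IsComp (G : SimpleGraph V) (ψ : Sym2 V → ℕ) (a b : ℕ) (A : Set (Sym2 V)) (v w : V) :
    Prop :=
  (∀ e ∈ A, FE G ψ a b e) ∧ ClosedF G ψ a b A ∧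
  (∀ e ∈ A, ∀ f ∈ A,
    Relation.ReflTransGen (fun x y => FE G ψ a b y ∧ adjE x y) e f) ∧
  v ≠ w ∧
  (∀ u : V, (Touched A u ∧ EndptV G ψ a b u) ↔ (u = v ∨ u = w))

lemma edge_ne {e : Sym2 V} (he : e ∈ G.edgeSet) {x y : V} (hxy : e = s(x, y)) : x ≠ y := by
  rintro rfl
  rw [hxy, SimpleGraph.mem_edgeSet] at he
  exact G.irrefl he

lemma comp_subset_closed {A : Set (Sym2 V)} {v w : V} {B : Set (Sym2 V)}
    (hA : IsComp G ψ a b A v w) (hB : ClosedF G ψ a b B)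
    (hz : ∃ z : V, Touched A z ∧ Touched B z) : A ⊆ B := by
  obtain ⟨z, ⟨e, heA, hze⟩, ⟨g, hgB, hzg⟩⟩ := hz
  have heB : e ∈ B := hB g hgB e (hA.1 e heA) ⟨z, hzg, hze⟩
  have key : ∀ f, Relation.ReflTransGen (fun x y => FE G ψ a b y ∧ adjE x y) e f → f ∈ B := by
    intro f h
    induction h with
    | refl => exact heB
    | tail _ hstep ih => exact hB _ ih _ hstep.1 hstep.2
  exact fun f hfA => key f (hA.2.2.1 e heA f hfA)

/-- invariant of the path-growing process -/
def GrowInv (G : SimpleGraph V) (ψ : Sym2 V → ℕ) (a b : ℕ) (v : V)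
    (A : Set (Sym2 V)) (w : V) (T : Finset V) : Prop :=
  (∀ e ∈ A, FE G ψ a b e) ∧
  (∃ e ∈ A, v ∈ e) ∧
  (∀ u : V, u ≠ w → Touched A u → ∀ f, FE G ψ a b f → u ∈ f → f ∈ A) ∧
  (∃ e ∈ A, w ∈ e ∧ ∀ f ∈ A, w ∈ f → f = e) ∧
  (∀ e ∈ A, ∀ f ∈ A,
    Relation.ReflTransGen (fun x y => FE G ψ a b y ∧ adjE x y) e f) ∧
  v ≠ w ∧
  (∀ u : V, Touched A u → u ≠ v → u ≠ w →
    ∃ e ∈ A, ∃ f ∈ A, e ≠ f ∧ u ∈ e ∧ u ∈ f) ∧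
  (∀ u : V, u ∈ T ↔ Touched A u)

lemma grow_step (hψ : IsEdgeKColoring G k ψ) (hab : a ≠ b) {v : V}
    (hv : EndptV G ψ a b v) :
    ∀ fuel : ℕ, ∀ A : Set (Sym2 V), ∀ w : V, ∀ T : Finset V,
      GrowInv G ψ a b v A w T → Fintype.card V ≤ T.card + fuel →
      ∃ A' w', IsComp G ψ a b A' v w' := by
  classical
  obtain ⟨ev, ⟨hevF, hvev⟩, hvuniq⟩ := hv
  have hvEP : EndptV G ψ a b v := ⟨ev, ⟨hevF, hvev⟩, hvuniq⟩
  intro fuel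
  induction fuel with
  | zero =>
    intro A w T hInv hcard
    obtain ⟨i1, i2, i3, ⟨ew, hewA, hwew, hwuniq⟩, i5, i6, i7, i8⟩ := hInv
    have hTuniv : T = Finset.univ :=
      Finset.eq_univ_of_card T (le_antisymm (Finset.card_le_univ T) (by simpa using hcard))
    have hstuck : ∀ f, FE G ψ a b f → w ∈ f → f ∈ A := by
      intro f hf hwf
      by_contra hfA
      obtain ⟨w', hfw'⟩ := Sym2.mem_iff_exists.mp hwf
      have hne : w ≠ w' := edge_ne hf.1 hfw'
      have hw't : Touched A w' := (i8 w').mp (by rw [hTuniv]; exact Finset.mem_univ w')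
      rcases eq_or_ne w' v with rfl | hv'
      · have h1 : f = ev := hvuniq f ⟨hf, by simp [hfw']⟩
        obtain ⟨e₂, he₂A, hve₂⟩ := i2
        have h2 : e₂ = ev := hvuniq e₂ ⟨i1 e₂ he₂A, hve₂⟩
        exact hfA (by rwa [h1, ← h2])
      · exact hfA (i3 w' (fun h => hne h.symm) hw't f hf (by simp [hfw']))
    refine ⟨A, w, i1, ?_, i5, i6, ?_⟩
    · intro e heA f hf ⟨u, hue, huf⟩
      rcases eq_or_ne u w with rfl | huw
      · exact hstuck f hf huf
      · exact i3 u huw ⟨e, heA, hue⟩ f hf huf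
    · intro u
      constructor
      · rintro ⟨htu, hepu⟩
        by_contra hcon
        push_neg at hcon
        obtain ⟨e, heA, f, hfA, hef, hue, huf⟩ := i7 u htu hcon.1 hcon.2
        obtain ⟨g, -, hguniq⟩ := hepu
        exact hef ((hguniq e ⟨i1 e heA, hue⟩).trans (hguniq f ⟨i1 f hfA, huf⟩).symm)
      · rintro (rfl | rfl)
        · obtain ⟨e₂, he₂A, hve₂⟩ := i2
          exact ⟨⟨e₂, he₂A, hve₂⟩, hvEP⟩
        · refine ⟨⟨ew, hewA, hwew⟩, ⟨ew, ⟨i1 ew hewA, hwew⟩, ?_⟩⟩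
          intro f ⟨hf, hwf⟩
          exact hwuniq f (hstuck f hf hwf) hwf
  | succ n ih =>
    intro A w T hInv hcard
    by_cases hext : ∃ f, FE G ψ a b f ∧ w ∈ f ∧ f ∉ A
    · obtain ⟨i1, i2, i3, ⟨ew, hewA, hwew, hwuniq⟩, i5, i6, i7, i8⟩ := hInv
      obtain ⟨f, hf, hwf, hfA⟩ := hext
      obtain ⟨w', hfw'⟩ := Sym2.mem_iff_exists.mp hwf
      have hnew : w ≠ w' := edge_ne hf.1 hfw'
      have hw'f : w' ∈ f := by simp [hfw']
      have hfew : f ≠ ew := fun h => hfA (h ▸ hewA)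
      have hw'un : ¬ Touched A w' := by
        intro htw'
        rcases eq_or_ne w' v with rfl | hv'
        · have h1 : f = ev := hvuniq f ⟨hf, hw'f⟩
          obtain ⟨e₂, he₂A, hve₂⟩ := i2
          have h2 : e₂ = ev := hvuniq e₂ ⟨i1 e₂ he₂A, hve₂⟩
          exact hfA (by rwa [h1, ← h2])
        · rcases eq_or_ne w' w with rfl | hw'
          · exact hnew rfl
          · exact hfA (i3 w' hw' htw' f hf hw'f)
      have hwT : w ∈ T := (i8 w).mpr ⟨ew, hewA, hwew⟩
      have hw'T : w' ∉ T := fun h => hw'un ((i8 w').mp h)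
      refine ih (insert f A) w' (insert w' T) ⟨?_, ?_, ?_, ?_, ?_, ?_, ?_, ?_⟩ ?_
      · rintro e (rfl | heA); exact hf; exact i1 e heA
      · obtain ⟨e₂, he₂A, hve₂⟩ := i2; exact ⟨e₂, Or.inr he₂A, hve₂⟩
      · intro u huw' htu g hg hug
        have hufvw : u ∈ f → u = w ∨ u = w' := by
          intro huf; rw [hfw'] at huf; exact Sym2.mem_iff.mp huf
        rcases eq_or_ne u w with rfl | huw
        · rcases eq_or_ne g f with rfl | hgf
          · exact Or.inl rfl
          · rcases eq_or_ne g ew with rfl | hgew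
            · exact Or.inr hewA
            · exact (deg_le_two hψ hab hg hf (i1 ew hewA) hug hwf hwew hgf hgew hfew).elim
        · have htuA : Touched A u := by
            obtain ⟨e, heA', hue⟩ := htu
            rcases heA' with rfl | heA'
            · rcases hufvw hue with rfl | rfl
              · exact absurd rfl huw
              · exact absurd rfl huw'
            · exact ⟨e, heA', hue⟩
          exact Or.inr (i3 u huw htuA g hg hug)
      · refine ⟨f, Or.inl rfl, hw'f, ?_⟩
        rintro g (rfl | hgA) hw'g
        · rfl
        · exact absurd ⟨g, hgA, hw'g⟩ hw'un
      · have hstepf : ∀ e ∈ A, Relation.ReflTransGen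
            (fun x y => FE G ψ a b y ∧ adjE x y) e f := by
          intro e heA
          exact Relation.ReflTransGen.tail (i5 e heA ew hewA) ⟨hf, w, hwew, hwf⟩
        have hstepb : ∀ e ∈ A, Relation.ReflTransGen
            (fun x y => FE G ψ a b y ∧ adjE x y) f e := by
          intro e heA
          exact Relation.ReflTransGen.trans
            (Relation.ReflTransGen.single ⟨i1 ew hewA, w, hwf, hwew⟩) (i5 ew hewA e heA)
        rintro e (rfl | heA) g (rfl | hgA)
        · exact Relation.ReflTransGen.refl
        · exact hstepb g hgA
        · exact hstepf e heA
        · exact i5 e heA g hgA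
      · intro h
        obtain ⟨e₂, he₂A, hve₂⟩ := i2
        exact hw'un ⟨e₂, he₂A, h ▸ hve₂⟩
      · intro u htu huv huw'
        rcases eq_or_ne u w with rfl | huw
        · exact ⟨ew, Or.inr hewA, f, Or.inl rfl, fun h => hfA (h.symm ▸ hewA), hwew, hwf⟩
        · have htuA : Touched A u := by
            obtain ⟨e, heA', hue⟩ := htu
            rcases heA' with rfl | heA'
            · rw [hfw'] at hue
              rcases Sym2.mem_iff.mp hue with rfl | rfl
              · exact absurd rfl huw
              · exact absurd rfl huw'
            · exact ⟨e, heA', hue⟩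
          obtain ⟨e, heA, g, hgA, hef, hue, hug⟩ := i7 u htuA huv huw
          exact ⟨e, Or.inr heA, g, Or.inr hgA, hef, hue, hug⟩
      · intro u
        rw [Finset.mem_insert]
        constructor
        · rintro (rfl | htu)
          · exact ⟨f, Or.inl rfl, hw'f⟩
          · obtain ⟨e, heA, hue⟩ := (i8 u).mp htu; exact ⟨e, Or.inr heA, hue⟩
        · rintro ⟨e, heA', hue⟩
          rcases heA' with rfl | heA'
          · rw [hfw'] at hue
            rcases Sym2.mem_iff.mp hue with rfl | rfl
            · exact Or.inr hwT
            · exact Or.inl rfl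
          · exact Or.inr ((i8 u).mpr ⟨e, heA', hue⟩)
      · rw [Finset.card_insert_of_notMem hw'T]
        omega
    · obtain ⟨i1, i2, i3, ⟨ew, hewA, hwew, hwuniq⟩, i5, i6, i7, i8⟩ := hInv
      push_neg at hext
      have hstuck : ∀ f, FE G ψ a b f → w ∈ f → f ∈ A := fun f hf hwf => hext f hf hwf
      refine ⟨A, w, i1, ?_, i5, i6, ?_⟩
      · intro e heA f hf ⟨u, hue, huf⟩
        rcases eq_or_ne u w with rfl | huw
        · exact hstuck f hf huf
        · exact i3 u huw ⟨e, heA, hue⟩ f hf huf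
      · intro u
        constructor
        · rintro ⟨htu, hepu⟩
          by_contra hcon
          push_neg at hcon
          obtain ⟨e, heA, f, hfA, hef, hue, huf⟩ := i7 u htu hcon.1 hcon.2
          obtain ⟨g, -, hguniq⟩ := hepu
          exact hef ((hguniq e ⟨i1 e heA, hue⟩).trans (hguniq f ⟨i1 f hfA, huf⟩).symm)
        · rintro (rfl | rfl)
          · obtain ⟨e₂, he₂A, hve₂⟩ := i2
            exact ⟨⟨e₂, he₂A, hve₂⟩, hvEP⟩
          · refine ⟨⟨ew, hewA, hwew⟩, ⟨ew, ⟨i1 ew hewA, hwew⟩, ?_⟩⟩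
            intro f ⟨hf, hwf⟩
            exact hwuniq f (hstuck f hf hwf) hwf

/-- every endpoint vertex has a path component -/
lemma exists_comp (hψ : IsEdgeKColoring G k ψ) (hab : a ≠ b) {v : V}
    (hv : EndptV G ψ a b v) : ∃ A w', IsComp G ψ a b A v w' := by
  classical
  obtain ⟨e₀, ⟨he₀F, hve₀⟩, huniq⟩ := id hv
  obtain ⟨w₀, he₀⟩ := Sym2.mem_iff_exists.mp hve₀
  have hvw₀ : v ≠ w₀ := edge_ne he₀F.1 he₀
  have hw₀e₀ : w₀ ∈ e₀ := by simp [he₀]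
  have hmemiff : ∀ u : V, u ∈ e₀ ↔ u = v ∨ u = w₀ := by
    intro u; rw [he₀]; exact Sym2.mem_iff
  refine grow_step hψ hab hv (Fintype.card V) {e₀} w₀ {v, w₀}
    ⟨?_, ⟨e₀, rfl, hve₀⟩, ?_, ⟨e₀, rfl, hw₀e₀, fun f hf _ => hf⟩, ?_, hvw₀, ?_, ?_⟩ ?_
  · rintro e rfl; exact he₀F
  · rintro u huw ⟨e, rfl, hue⟩ f hf huf
    rcases (hmemiff u).mp hue with rfl | rfl
    · exact huniq f ⟨hf, huf⟩
    · exact absurd rfl huw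
  · rintro e rfl f rfl; exact Relation.ReflTransGen.refl
  · rintro u ⟨e, rfl, hue⟩ huv huw
    rcases (hmemiff u).mp hue with rfl | rfl
    · exact absurd rfl huv
    · exact absurd rfl huw
  · intro u
    rw [Finset.mem_insert, Finset.mem_singleton]
    constructor
    · rintro (rfl | rfl)
      · exact ⟨e₀, rfl, hve₀⟩
      · exact ⟨e₀, rfl, hw₀e₀⟩
    · rintro ⟨e, rfl, hue⟩; exact (hmemiff u).mp hue
  · have h2 : ({v, w₀} : Finset V).card = 2 := Finset.card_pair hvw₀
    rw [h2]
    have := Finset.card_le_univ ({v, w₀} : Finset V)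
    omega

end Comp
end BKLS
namespace BKLS
section Swap

variable {V : Type*} [Fintype V] {G : SimpleGraph V} {k : ℕ} {ψ : Sym2 V → ℕ} {a b : ℕ}
variable {A : Set (Sym2 V)}

open Classical in
/-- swap colors a,b on the edge set A -/
noncomputable def swapC (a b : ℕ) (A : Set (Sym2 V)) (ψ : Sym2 V → ℕ) : Sym2 V → ℕ :=
  fun e => if e ∈ A then Equiv.swap a b (ψ e) else ψ e

lemma mem_swap_image {W : Set ℕ} {c : ℕ} : c ∈ (Equiv.swap a b) '' W ↔ Equiv.swap a b c ∈ W := by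
  constructor
  · rintro ⟨d, hd, rfl⟩; rwa [Equiv.swap_apply_self]
  · intro h; exact ⟨Equiv.swap a b c, h, Equiv.swap_apply_self a b c⟩

lemma swap_image_involution (W : Set ℕ) :
    (Equiv.swap a b) '' ((Equiv.swap a b) '' W) = W := by
  ext c
  rw [mem_swap_image, mem_swap_image, Equiv.swap_apply_self]

lemma swap_image_eq_iff {X W : Set ℕ} :
    (Equiv.swap a b) '' X = W ↔ X = (Equiv.swap a b) '' W := by
  constructor
  · rintro rfl; rw [swap_image_involution]
  · rintro rfl; rw [swap_image_involution]

lemma image_swap_of_both {W : Set ℕ} (ha : a ∈ W) (hb : b ∈ W) :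
    (Equiv.swap a b) '' W = W := by
  ext c
  rw [mem_swap_image]
  rcases eq_or_ne c a with rfl | hca
  · simp [Equiv.swap_apply_left, hb, ha]
  · rcases eq_or_ne c b with rfl | hcb
    · simp [Equiv.swap_apply_right, ha, hb]
    · rw [Equiv.swap_apply_of_ne_of_ne hca hcb]

lemma image_swap_of_neither {W : Set ℕ} (ha : a ∉ W) (hb : b ∉ W) :
    (Equiv.swap a b) '' W = W := by
  ext c
  rw [mem_swap_image]
  rcases eq_or_ne c a with rfl | hca
  · simp only [Equiv.swap_apply_left]
    exact ⟨fun h => absurd h hb, fun h => absurd h ha⟩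
  · rcases eq_or_ne c b with rfl | hcb
    · simp only [Equiv.swap_apply_right]
      exact ⟨fun h => absurd h ha, fun h => absurd h hb⟩
    · rw [Equiv.swap_apply_of_ne_of_ne hca hcb]

lemma swapC_proper (hψ : IsEdgeKColoring G k ψ)
    (ha : a ∈ Finset.Icc 1 k) (hb : b ∈ Finset.Icc 1 k)
    (hA1 : ∀ e ∈ A, FE G ψ a b e) (hA2 : ClosedF G ψ a b A) :
    IsEdgeKColoring G k (swapC a b A ψ) := by
  constructor
  · intro e he
    unfold swapC
    split_ifs with heA
    · rcases (hA1 e heA).2 with hc | hc <;> rw [hc]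
      · rwa [Equiv.swap_apply_left]
      · rwa [Equiv.swap_apply_right]
    · exact hψ.1 e he
  · intro e₁ he₁ e₂ he₂ hne hadj
    unfold swapC
    have notF : ∀ f g : Sym2 V, g ∈ A → f ∈ G.edgeSet → f ∉ A → adjE g f →
        ψ f ≠ a ∧ ψ f ≠ b := by
      intro f g hg hfG hfA hadj'
      by_contra hcon
      push_neg at hcon
      exact hfA (hA2 g hg f ⟨hfG, or_iff_not_imp_left.mpr hcon⟩ hadj')
    obtain ⟨u, hu1, hu2⟩ := hadj
    split_ifs with h1 h2 h2
    · exact fun h => hψ.2 e₁ he₁ e₂ he₂ hne ⟨u, hu1, hu2⟩ ((Equiv.swap a b).injective h)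
    · have h3 := notF e₂ e₁ h1 he₂ h2 ⟨u, hu1, hu2⟩
      rcases (hA1 e₁ h1).2 with hc | hc <;> rw [hc]
      · rw [Equiv.swap_apply_left]; exact fun h => h3.2 h.symm
      · rw [Equiv.swap_apply_right]; exact fun h => h3.1 h.symm
    · have h3 := notF e₁ e₂ h2 he₁ h1 ⟨u, hu2, hu1⟩
      rcases (hA1 e₂ h2).2 with hc | hc <;> rw [hc]
      · rw [Equiv.swap_apply_left]; exact fun h => h3.2 h
      · rw [Equiv.swap_apply_right]; exact fun h => h3.1 h
    · exact hψ.2 e₁ he₁ e₂ he₂ hne ⟨u, hu1, hu2⟩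

lemma colorSet_swapC_untouched {v : V} (htv : ¬ Touched A v) :
    colorSet G (swapC a b A ψ) v = colorSet G ψ v := by
  ext c
  constructor
  · rintro ⟨e, heG, hve, hc⟩
    have heA : e ∉ A := fun h => htv ⟨e, h, hve⟩
    rw [swapC, if_neg heA] at hc
    exact ⟨e, heG, hve, hc⟩
  · rintro ⟨e, heG, hve, hc⟩
    have heA : e ∉ A := fun h => htv ⟨e, h, hve⟩
    exact ⟨e, heG, hve, by rw [swapC, if_neg heA]; exact hc⟩

lemma colorSet_swapC_touched (hψ : IsEdgeKColoring G k ψ)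
    (hA1 : ∀ e ∈ A, FE G ψ a b e) (hA2 : ClosedF G ψ a b A)
    {v : V} (htv : Touched A v) :
    colorSet G (swapC a b A ψ) v = (Equiv.swap a b) '' colorSet G ψ v := by
  obtain ⟨g, hgA, hvg⟩ := htv
  have hout : ∀ e, e ∈ G.edgeSet → v ∈ e → e ∉ A → ψ e ≠ a ∧ ψ e ≠ b := by
    intro e heG hve heA
    by_contra hcon
    push_neg at hcon
    exact heA (hA2 g hgA e ⟨heG, or_iff_not_imp_left.mpr hcon⟩ ⟨v, hvg, hve⟩)
  ext c
  constructor
  · rintro ⟨e, heG, hve, hc⟩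
    by_cases heA : e ∈ A
    · rw [swapC, if_pos heA] at hc
      exact ⟨ψ e, ⟨e, heG, hve, rfl⟩, hc⟩
    · rw [swapC, if_neg heA] at hc
      obtain ⟨h1, h2⟩ := hout e heG hve heA
      rw [hc] at h1 h2
      rw [mem_swap_image, Equiv.swap_apply_of_ne_of_ne h1 h2]
      exact ⟨e, heG, hve, hc⟩
  · rintro ⟨d, ⟨e, heG, hve, hd⟩, hc⟩
    by_cases heA : e ∈ A
    · exact ⟨e, heG, hve, by rw [swapC, if_pos heA, hd, hc]⟩
    · obtain ⟨h1, h2⟩ := hout e heG hve heA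
      have hdd : Equiv.swap a b d = d := by
        rw [← hd]; exact Equiv.swap_apply_of_ne_of_ne h1 h2
      refine ⟨e, heG, hve, ?_⟩
      rw [swapC, if_neg heA, hd]
      exact hdd.symm.trans hc

open Classical in
/-- after the swap, the color set of a vertex changes exactly at the endpoint vertices -/
lemma colorSet_swapC (hψ : IsEdgeKColoring G k ψ) (hab : a ≠ b)
    (hA1 : ∀ e ∈ A, FE G ψ a b e) (hA2 : ClosedF G ψ a b A)
    {used : Finset V} (hused : ∀ u, u ∈ used ↔ (Touched A u ∧ EndptV G ψ a b u)) (v : V) :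
    colorSet G (swapC a b A ψ) v =
      if v ∈ used then (Equiv.swap a b) '' colorSet G ψ v else colorSet G ψ v := by
  split_ifs with hv
  · exact colorSet_swapC_touched hψ hA1 hA2 ((hused v).mp hv).1
  · by_cases htv : Touched A v
    · have hnep : ¬ EndptV G ψ a b v := fun h => hv ((hused v).mpr ⟨htv, h⟩)
      obtain ⟨h1, h2⟩ := both_colors_of_touched_not_endpt hψ hab
        (hA1 _ htv.choose_spec.1) htv.choose_spec.2 hnep
      rw [colorSet_swapC_touched hψ hA1 hA2 htv, image_swap_of_both h1 h2]
    · exact colorSet_swapC_untouched htv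

/-- number of used vertices of a given class -/
noncomputable def cntU (G : SimpleGraph V) (ψ : Sym2 V → ℕ) (used : Finset V) (W : Set ℕ) : ℕ :=
  {u : V | u ∈ used ∧ colorSet G ψ u = W}.ncard

lemma nColorSet_swapC (hψ : IsEdgeKColoring G k ψ) (hab : a ≠ b)
    (hA1 : ∀ e ∈ A, FE G ψ a b e) (hA2 : ClosedF G ψ a b A)
    {used : Finset V} (hused : ∀ u, u ∈ used ↔ (Touched A u ∧ EndptV G ψ a b u)) (W : Set ℕ) :
    nColorSet G (swapC a b A ψ) W + cntU G ψ used W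
      = nColorSet G ψ W + cntU G ψ used ((Equiv.swap a b) '' W) := by
  have hcls := colorSet_swapC hψ hab hA1 hA2 hused
  have e1 : {v : V | colorSet G (swapC a b A ψ) v = W} =
      {v : V | v ∉ used ∧ colorSet G ψ v = W} ∪
      {v : V | v ∈ used ∧ colorSet G ψ v = (Equiv.swap a b) '' W} := by
    ext v
    rw [Set.mem_setOf_eq, hcls v]
    by_cases hv : v ∈ used
    · rw [if_pos hv]
      simp only [Set.mem_union, Set.mem_setOf_eq, hv, not_true, false_and, true_and, false_or]
      exact swap_image_eq_iff
    · rw [if_neg hv]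
      simp only [Set.mem_union, Set.mem_setOf_eq, hv, not_false_iff, true_and, false_and,
        or_false]
  have e2 : {v : V | colorSet G ψ v = W} =
      {v : V | v ∉ used ∧ colorSet G ψ v = W} ∪
      {v : V | v ∈ used ∧ colorSet G ψ v = W} := by
    ext v
    by_cases hv : v ∈ used <;> simp [hv]
  have d1 : Disjoint {v : V | v ∉ used ∧ colorSet G ψ v = W}
      {v : V | v ∈ used ∧ colorSet G ψ v = (Equiv.swap a b) '' W} := by
    rw [Set.disjoint_left]; rintro v ⟨h1, -⟩ ⟨h2, -⟩; exact h1 h2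
  have d2 : Disjoint {v : V | v ∉ used ∧ colorSet G ψ v = W}
      {v : V | v ∈ used ∧ colorSet G ψ v = W} := by
    rw [Set.disjoint_left]; rintro v ⟨h1, -⟩ ⟨h2, -⟩; exact h1 h2
  rw [nColorSet, nColorSet, e1, e2, Set.ncard_union_eq d1 (Set.toFinite _) (Set.toFinite _),
    Set.ncard_union_eq d2 (Set.toFinite _) (Set.toFinite _), cntU, cntU]
  ring

end Swap
end BKLS
namespace BKLS
section Delta

variable {V : Type*} [Fintype V] {G : SimpleGraph V} {k : ℕ} {ψ : Sym2 V → ℕ} {a b : ℕ}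
variable {A : Set (Sym2 V)}

open Classical in
/-- integer indicator of a proposition -/
noncomputable def indI (p : Prop) : ℤ := if p then 1 else 0

lemma indI_iff {p q : Prop} (h : p ↔ q) : indI p = indI q := by
  unfold indI
  split_ifs with h1 h2 h2
  · rfl
  · exact absurd (h.mp h1) h2
  · exact absurd (h.mpr h2) h1
  · rfl

lemma indI_true {p : Prop} (h : p) : indI p = 1 := by unfold indI; exact if_pos h

lemma indI_false {p : Prop} (h : ¬ p) : indI p = 0 := by unfold indI; exact if_neg h

lemma fimage_swap_involution (P : Finset ℕ) :
    (P.image (Equiv.swap a b)).image (Equiv.swap a b) = P := by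
  rw [Finset.image_image]
  have h : (Equiv.swap a b) ∘ (Equiv.swap a b) = id := by
    funext c; simp [Equiv.swap_apply_self]
  rw [h, Finset.image_id]

lemma fimage_swap_subset_Icc {P : Finset ℕ} (hP : P ⊆ Finset.Icc 1 k)
    (ha : a ∈ Finset.Icc 1 k) (hb : b ∈ Finset.Icc 1 k) :
    P.image (Equiv.swap a b) ⊆ Finset.Icc 1 k := by
  intro c hc
  obtain ⟨d, hd, rfl⟩ := Finset.mem_image.mp hc
  rcases eq_or_ne d a with rfl | hda
  · rwa [Equiv.swap_apply_left]
  · rcases eq_or_ne d b with rfl | hdb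
    · rwa [Equiv.swap_apply_right]
    · rw [Equiv.swap_apply_of_ne_of_ne hda hdb]; exact hP hd

/-- the master Δ-formula for swapping a closed union of components whose
endpoint-vertex count imbalance is concentrated on classes P and Q -/
lemma colSum_swapC_delta (hψ : IsEdgeKColoring G k ψ) (hab : a ≠ b)
    (hA1 : ∀ e ∈ A, FE G ψ a b e) (hA2 : ClosedF G ψ a b A)
    {used : Finset V} (hused : ∀ u, u ∈ used ↔ (Touched A u ∧ EndptV G ψ a b u))
    (P Q : Finset ℕ) (hP : P ⊆ Finset.Icc 1 k) (hQ : Q ⊆ Finset.Icc 1 k)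
    (ha : a ∈ Finset.Icc 1 k) (hb : b ∈ Finset.Icc 1 k)
    (hPP : P ≠ P.image (Equiv.swap a b)) (hQQ : Q ≠ Q.image (Equiv.swap a b))
    (hicnt : ∀ W : Set ℕ,
      (cntU G ψ used W : ℤ) - cntU G ψ used ((Equiv.swap a b) '' W)
        = indI (W = ↑P) - indI (W = ↑(P.image (Equiv.swap a b)))
          + indI (W = ↑Q) - indI (W = ↑(Q.image (Equiv.swap a b)))) :
    (colSum G k (swapC a b A ψ) : ℤ) - colSum G k ψ
      = 4 + 4 * indI (Q = P) - 4 * indI (Q = P.image (Equiv.swap a b))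
        - 2 * ((nColorSet G ψ ↑P : ℤ) - nColorSet G ψ ↑(P.image (Equiv.swap a b))
               + (nColorSet G ψ ↑Q : ℤ) - nColorSet G ψ ↑(Q.image (Equiv.swap a b))) := by
  classical
  have hdm : ∀ S : Finset ℕ,
      (cntU G ψ used ↑S : ℤ) - cntU G ψ used ((Equiv.swap a b) '' ↑S)
        = indI (S = P) - indI (S = P.image (Equiv.swap a b))
          + indI (S = Q) - indI (S = Q.image (Equiv.swap a b)) := by
    intro S
    rw [hicnt ↑S,
      indI_iff (Finset.coe_inj (s₁ := S) (s₂ := P)),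
      indI_iff (Finset.coe_inj (s₁ := S) (s₂ := P.image (Equiv.swap a b))),
      indI_iff (Finset.coe_inj (s₁ := S) (s₂ := Q)),
      indI_iff (Finset.coe_inj (s₁ := S) (s₂ := Q.image (Equiv.swap a b)))]
  have hn' : ∀ S : Finset ℕ,
      (nColorSet G (swapC a b A ψ) ↑S : ℤ)
        = (nColorSet G ψ ↑S : ℤ)
          - (indI (S = P) - indI (S = P.image (Equiv.swap a b))
             + indI (S = Q) - indI (S = Q.image (Equiv.swap a b))) := by
    intro S
    have h0 := nColorSet_swapC hψ hab hA1 hA2 hused (↑S)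
    have h1 : (nColorSet G (swapC a b A ψ) ↑S : ℤ) + cntU G ψ used ↑S
        = (nColorSet G ψ ↑S : ℤ) + cntU G ψ used ((Equiv.swap a b) '' ↑S) := by
      exact_mod_cast h0
    have h2 := hdm S
    linarith
  have hdiff : (colSum G k (swapC a b A ψ) : ℤ) - colSum G k ψ
      = ∑ S ∈ (Finset.Icc 1 k).powerset,
          (((nColorSet G (swapC a b A ψ) ↑S : ℤ))^2 - ((nColorSet G ψ ↑S : ℤ))^2) := by
    unfold colSum
    push_cast
    rw [Finset.sum_sub_distrib]
  have hterm : ∀ S : Finset ℕ,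
      ((nColorSet G (swapC a b A ψ) ↑S : ℤ))^2 - ((nColorSet G ψ ↑S : ℤ))^2
        = (indI (S = P) - indI (S = P.image (Equiv.swap a b))
           + indI (S = Q) - indI (S = Q.image (Equiv.swap a b)))
          * ((indI (S = P) - indI (S = P.image (Equiv.swap a b))
              + indI (S = Q) - indI (S = Q.image (Equiv.swap a b)))
             - 2 * (nColorSet G ψ ↑S : ℤ)) := by
    intro S
    rw [hn' S]; ring
  rw [hdiff, Finset.sum_congr rfl (fun S _ => hterm S)]
  have hPm : P ∈ (Finset.Icc 1 k).powerset := Finset.mem_powerset.mpr hP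
  have hPσm : P.image (Equiv.swap a b) ∈ (Finset.Icc 1 k).powerset :=
    Finset.mem_powerset.mpr (fimage_swap_subset_Icc hP ha hb)
  have hQm : Q ∈ (Finset.Icc 1 k).powerset := Finset.mem_powerset.mpr hQ
  have hQσm : Q.image (Equiv.swap a b) ∈ (Finset.Icc 1 k).powerset :=
    Finset.mem_powerset.mpr (fimage_swap_subset_Icc hQ ha hb)
  rcases eq_or_ne Q P with h | hQP
  · subst h
    -- Q = P : two classes
    have hsub : ({Q, Q.image (Equiv.swap a b)} : Finset (Finset ℕ))
        ⊆ (Finset.Icc 1 k).powerset := by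
      intro S hS
      rcases Finset.mem_insert.mp hS with rfl | hS
      · exact hQm
      · rw [Finset.mem_singleton.mp hS]; exact hQσm
    rw [← Finset.sum_subset hsub]
    · rw [Finset.sum_pair hQQ]
      rw [indI_true (rfl : Q = Q), indI_false hQQ,
        indI_false (Ne.symm hQQ),
        indI_true (rfl : Q.image (Equiv.swap a b) = Q.image (Equiv.swap a b))]
      ring
    · intro S hS hSB
      rw [Finset.mem_insert, Finset.mem_singleton] at hSB
      push_neg at hSB
      rw [indI_false hSB.1, indI_false hSB.2]
      ring
  · rcases eq_or_ne Q (P.image (Equiv.swap a b)) with h | hQPσ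
    · subst h
      -- Q = Pσ : everything cancels
      have hQσP : (P.image (Equiv.swap a b)).image (Equiv.swap a b) = P :=
        fimage_swap_involution P
      have hzero : ∀ S ∈ (Finset.Icc 1 k).powerset,
          (indI (S = P) - indI (S = P.image (Equiv.swap a b))
           + indI (S = P.image (Equiv.swap a b))
           - indI (S = (P.image (Equiv.swap a b)).image (Equiv.swap a b)))
          * ((indI (S = P) - indI (S = P.image (Equiv.swap a b))
              + indI (S = P.image (Equiv.swap a b))
              - indI (S = (P.image (Equiv.swap a b)).image (Equiv.swap a b)))
             - 2 * (nColorSet G ψ ↑S : ℤ)) = (0 : ℤ) := by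
        intro S _
        rw [hQσP]
        ring
      rw [Finset.sum_congr rfl hzero, Finset.sum_const_zero]
      rw [hQσP, indI_false hQP,
        indI_true (rfl : P.image (Equiv.swap a b) = P.image (Equiv.swap a b))]
      ring
    · -- generic case : four distinct classes
      have hQσP : Q.image (Equiv.swap a b) ≠ P := by
        intro h
        exact hQPσ (by rw [← h, fimage_swap_involution])
      have hQσPσ : Q.image (Equiv.swap a b) ≠ P.image (Equiv.swap a b) := by
        intro h
        have h2 := congrArg (fun S : Finset ℕ => S.image (Equiv.swap a b)) h
        simp only [fimage_swap_involution] at h2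
        exact hQP h2
      have hd1 : P ∉ ({P.image (Equiv.swap a b), Q, Q.image (Equiv.swap a b)} :
          Finset (Finset ℕ)) := by
        simp only [Finset.mem_insert, Finset.mem_singleton]
        push_neg
        exact ⟨hPP, Ne.symm hQP, Ne.symm hQσP⟩
      have hd2 : P.image (Equiv.swap a b) ∉ ({Q, Q.image (Equiv.swap a b)} :
          Finset (Finset ℕ)) := by
        simp only [Finset.mem_insert, Finset.mem_singleton]
        push_neg
        exact ⟨Ne.symm hQPσ, Ne.symm hQσPσ⟩
      have hd3 : Q ∉ ({Q.image (Equiv.swap a b)} : Finset (Finset ℕ)) := by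
        rw [Finset.mem_singleton]; exact hQQ
      have hsub : ({P, P.image (Equiv.swap a b), Q, Q.image (Equiv.swap a b)} :
          Finset (Finset ℕ)) ⊆ (Finset.Icc 1 k).powerset := by
        intro S hS
        simp only [Finset.mem_insert, Finset.mem_singleton] at hS
        rcases hS with rfl | rfl | rfl | rfl
        · exact hPm
        · exact hPσm
        · exact hQm
        · exact hQσm
      rw [← Finset.sum_subset hsub]
      · rw [Finset.sum_insert hd1, Finset.sum_insert hd2, Finset.sum_insert hd3,
          Finset.sum_singleton]
        rw [indI_true (rfl : P = P),
          indI_true (rfl : P.image (Equiv.swap a b) = P.image (Equiv.swap a b)),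
          indI_true (rfl : Q = Q),
          indI_true (rfl : Q.image (Equiv.swap a b) = Q.image (Equiv.swap a b)),
          indI_false hPP, indI_false (Ne.symm hQP), indI_false (Ne.symm hQσP),
          indI_false (Ne.symm hPP), indI_false (Ne.symm hQPσ), indI_false (Ne.symm hQσPσ),
          indI_false hQP, indI_false hQPσ, indI_false hQQ, indI_false (Ne.symm hQQ),
          indI_false hQσP, indI_false hQσPσ]
        ring
      · intro S hS hSB
        simp only [Finset.mem_insert, Finset.mem_singleton] at hSB
        push_neg at hSB
        rw [indI_false hSB.1, indI_false hSB.2.1, indI_false hSB.2.2.1,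
          indI_false hSB.2.2.2]
        ring

end Delta
end BKLS
namespace BKLS
section ChainUtil

variable {V : Type*} [Fintype V] {G : SimpleGraph V} {k : ℕ} {ψ : Sym2 V → ℕ} {a b : ℕ}

/-- X contains exactly one of a, b -/
def PabF (a b : ℕ) (X : Finset ℕ) : Prop := (a ∈ X ∧ b ∉ X) ∨ (b ∈ X ∧ a ∉ X)

lemma pabF_ne_image (hab : a ≠ b) {X : Finset ℕ} (h : PabF a b X) :
    X ≠ X.image (Equiv.swap a b) := by
  rcases h with ⟨h1, h2⟩ | ⟨h1, h2⟩
  · intro hX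
    apply h2
    rw [hX, Finset.mem_image]
    exact ⟨a, h1, Equiv.swap_apply_left a b⟩
  · intro hX
    apply h2
    rw [hX, Finset.mem_image]
    exact ⟨b, h1, Equiv.swap_apply_right a b⟩

lemma pabF_image (hab : a ≠ b) {X : Finset ℕ} (h : PabF a b X) :
    PabF a b (X.image (Equiv.swap a b)) := by
  have mem_im : ∀ c, c ∈ X.image (Equiv.swap a b) ↔ Equiv.swap a b c ∈ X := by
    intro c
    rw [Finset.mem_image]
    constructor
    · rintro ⟨d, hd, rfl⟩; rwa [Equiv.swap_apply_self]
    · intro hc; exact ⟨Equiv.swap a b c, hc, Equiv.swap_apply_self a b c⟩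
  rcases h with ⟨h1, h2⟩ | ⟨h1, h2⟩
  · right
    constructor
    · rw [mem_im, Equiv.swap_apply_right]; exact h1
    · rw [mem_im, Equiv.swap_apply_left]; exact h2
  · left
    constructor
    · rw [mem_im, Equiv.swap_apply_left]; exact h1
    · rw [mem_im, Equiv.swap_apply_right]; exact h2

lemma exists_finset_colorSet (hψ : IsEdgeKColoring G k ψ) (v : V) :
    ∃ X : Finset ℕ, X ⊆ Finset.Icc 1 k ∧ ↑X = colorSet G ψ v := by
  classical
  refine ⟨(Finset.Icc 1 k).filter (· ∈ colorSet G ψ v), Finset.filter_subset _ _, ?_⟩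
  ext c
  simp only [Finset.coe_filter, Set.mem_setOf_eq]
  exact ⟨fun h => h.2, fun h => ⟨colorSet_subset_Icc hψ v h, h⟩⟩

/-- v is an endpoint vertex iff its class (as a finset) has exactly one of a,b -/
lemma endptV_of_class (hψ : IsEdgeKColoring G k ψ) (hab : a ≠ b) {v : V} {X : Finset ℕ}
    (hX : (↑X : Set ℕ) = colorSet G ψ v) (hpab : PabF a b X) : EndptV G ψ a b v := by
  rw [endptV_iff hψ hab]
  rcases hpab with ⟨h1, h2⟩ | ⟨h1, h2⟩
  · left
    constructor
    · rw [← hX]; exact_mod_cast h1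
    · rw [← hX]; exact_mod_cast h2
  · right
    constructor
    · rw [← hX]; exact_mod_cast h1
    · rw [← hX]; exact_mod_cast h2

lemma class_of_endptV (hψ : IsEdgeKColoring G k ψ) (hab : a ≠ b) {v : V} {X : Finset ℕ}
    (hX : (↑X : Set ℕ) = colorSet G ψ v) (hv : EndptV G ψ a b v) : PabF a b X := by
  rw [endptV_iff hψ hab] at hv
  rcases hv with ⟨h1, h2⟩ | ⟨h1, h2⟩
  · left
    rw [← hX] at h1 h2
    exact ⟨by exact_mod_cast h1, by exact_mod_cast h2⟩
  · right
    rw [← hX] at h1 h2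
    exact ⟨by exact_mod_cast h1, by exact_mod_cast h2⟩

lemma cntU_empty (W : Set ℕ) : cntU G ψ ∅ W = 0 := by
  unfold cntU
  convert Set.ncard_empty V
  ext v
  simp

lemma cntU_insert {x : V} {used used' : Finset V} (hx : x ∉ used)
    (h' : ∀ u, u ∈ used' ↔ u = x ∨ u ∈ used) (W : Set ℕ) :
    (cntU G ψ used' W : ℤ) = cntU G ψ used W + indI (colorSet G ψ x = W) := by
  unfold cntU
  by_cases h : colorSet G ψ x = W
  · rw [indI_true h]
    have hset : {u : V | u ∈ used' ∧ colorSet G ψ u = W}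
        = insert x {u : V | u ∈ used ∧ colorSet G ψ u = W} := by
      ext u
      simp only [Set.mem_setOf_eq, h' u, Set.mem_insert_iff]
      constructor
      · rintro ⟨rfl | hu, hc⟩
        · exact Or.inl rfl
        · exact Or.inr ⟨hu, hc⟩
      · rintro (rfl | ⟨hu, hc⟩)
        · exact ⟨Or.inl rfl, h⟩
        · exact ⟨Or.inr hu, hc⟩
    rw [hset, Set.ncard_insert_of_notMem (fun hc => hx hc.1) (Set.toFinite _)]
    push_cast
    ring
  · rw [indI_false h]
    have hset : {u : V | u ∈ used' ∧ colorSet G ψ u = W}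
        = {u : V | u ∈ used ∧ colorSet G ψ u = W} := by
      ext u
      simp only [Set.mem_setOf_eq, h' u]
      constructor
      · rintro ⟨rfl | hu, hc⟩
        · exact absurd hc h
        · exact ⟨hu, hc⟩
      · rintro ⟨hu, hc⟩
        exact ⟨Or.inr hu, hc⟩
    rw [hset]
    ring

lemma cntU_le_nColorSet (used : Finset V) (W : Set ℕ) :
    cntU G ψ used W ≤ nColorSet G ψ W := by
  unfold cntU nColorSet
  exact Set.ncard_le_ncard (fun v hv => hv.2) (Set.toFinite _)

lemma nColorSet_le_cntU_of_all_used {used : Finset V} {W : Set ℕ}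
    (h : ∀ v : V, colorSet G ψ v = W → v ∈ used) :
    nColorSet G ψ W ≤ cntU G ψ used W := by
  unfold cntU nColorSet
  exact Set.ncard_le_ncard (fun v hv => ⟨h v hv, hv⟩) (Set.toFinite _)

lemma exists_vertex_of_nColorSet_pos {W : Set ℕ} (h : 1 ≤ nColorSet G ψ W) :
    ∃ v : V, colorSet G ψ v = W := by
  unfold nColorSet at h
  have := Set.nonempty_of_ncard_ne_zero (Nat.one_le_iff_ne_zero.mp h)
  obtain ⟨v, hv⟩ := this
  exact ⟨v, hv⟩

end ChainUtil
end BKLS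
namespace BKLS
section Chain

variable {V : Type*} [Fintype V] {G : SimpleGraph V} {k : ℕ} {ψ : Sym2 V → ℕ} {a b : ℕ}

lemma swap_image_inj {X W : Set ℕ} :
    (Equiv.swap a b) '' X = (Equiv.swap a b) '' W ↔ X = W := by
  constructor
  · intro h
    have := congrArg (fun S => (Equiv.swap a b) '' S) h
    simpa [swap_image_involution] using this
  · rintro rfl; rfl

/-- conclusion of the chain argument -/
def ChainConc (G : SimpleGraph V) (k : ℕ) (ψ : Sym2 V → ℕ) (a b : ℕ) (S₀ : Finset ℕ) :
    Prop :=
  ∃ ψ' X, Opt G k ψ' ∧ X ⊆ Finset.Icc 1 k ∧ PabF a b X ∧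
    X ≠ S₀.image (Equiv.swap a b) ∧
    ((X = S₀ ∧ (nColorSet G ψ ↑(S₀.image (Equiv.swap a b)) : ℤ) = nColorSet G ψ ↑S₀ - 2) ∨
     (X ≠ S₀ ∧ (nColorSet G ψ ↑(S₀.image (Equiv.swap a b)) : ℤ) = nColorSet G ψ ↑S₀ - 1 ∧
      (nColorSet G ψ ↑(X.image (Equiv.swap a b)) : ℤ) = nColorSet G ψ ↑X - 1)) ∧
    ∀ W : Finset ℕ, (nColorSet G ψ' ↑W : ℤ) = nColorSet G ψ ↑W
      - indI (W = S₀) + indI (W = S₀.image (Equiv.swap a b))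
      - indI (W = X) + indI (W = X.image (Equiv.swap a b))

/-- the chain invariant -/
def ChainInv (G : SimpleGraph V) (k : ℕ) (ψ : Sym2 V → ℕ) (a b : ℕ) (S₀ : Finset ℕ)
    (A : Set (Sym2 V)) (used : Finset V) (X : Finset ℕ) : Prop :=
  (∀ e ∈ A, FE G ψ a b e) ∧ ClosedF G ψ a b A ∧
  (∀ u : V, u ∈ used ↔ (Touched A u ∧ EndptV G ψ a b u)) ∧
  (∀ W : Set ℕ,
    (cntU G ψ used W : ℤ) - cntU G ψ used ((Equiv.swap a b) '' W)
      = indI (W = ↑S₀) - indI (W = ↑(S₀.image (Equiv.swap a b)))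
        + indI (W = ↑X) - indI (W = ↑(X.image (Equiv.swap a b))))

lemma chain_stuck (hopt : Opt G k ψ)
    (ha : a ∈ Finset.Icc 1 k) (hb : b ∈ Finset.Icc 1 k) (hab : a ≠ b)
    (S₀ : Finset ℕ) (hS₀I : S₀ ⊆ Finset.Icc 1 k) (hpabS₀ : PabF a b S₀)
    (hf : (nColorSet G ψ ↑(S₀.image (Equiv.swap a b)) : ℤ) ≤ nColorSet G ψ ↑S₀ - 1)
    (A : Set (Sym2 V)) (used : Finset V) (X : Finset ℕ)
    (hXI : X ⊆ Finset.Icc 1 k) (hpabX : PabF a b X)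
    (hInv : ChainInv G k ψ a b S₀ A used X)
    (hstuck : ∀ v : V, colorSet G ψ v = ↑(X.image (Equiv.swap a b)) → v ∈ used) :
    ChainConc G k ψ a b S₀ := by
  classical
  have hψ := hopt.1
  obtain ⟨c1, c2, c3, c5⟩ := hInv
  have hS₀ne : S₀ ≠ S₀.image (Equiv.swap a b) := pabF_ne_image hab hpabS₀
  have hXne : X ≠ X.image (Equiv.swap a b) := pabF_ne_image hab hpabX
  have hcoeX : ((Equiv.swap a b) '' (↑X : Set ℕ)) = ↑(X.image (Equiv.swap a b)) :=
    (Finset.coe_image).symm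
  -- counting bounds at the terminal class
  have hub : (nColorSet G ψ ↑(X.image (Equiv.swap a b)) : ℤ)
      ≤ cntU G ψ used ↑(X.image (Equiv.swap a b)) := by
    exact_mod_cast nColorSet_le_cntU_of_all_used hstuck
  have hlb : (cntU G ψ used ↑X : ℤ) ≤ nColorSet G ψ ↑X := by
    exact_mod_cast cntU_le_nColorSet used ↑X
  have hdmX := c5 ↑X
  rw [hcoeX] at hdmX
  rw [indI_true (rfl : (↑X : Set ℕ) = ↑X),
    indI_iff (Finset.coe_inj (s₁ := X) (s₂ := S₀)),
    indI_iff (Finset.coe_inj (s₁ := X) (s₂ := S₀.image (Equiv.swap a b))),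
    indI_iff (Finset.coe_inj (s₁ := X) (s₂ := X.image (Equiv.swap a b))),
    indI_false hXne] at hdmX
  -- the swapped coloring and optimality
  have hproper : IsEdgeKColoring G k (swapC a b A ψ) := swapC_proper hψ ha hb c1 c2
  have hopt2 : (0 : ℤ) ≤ (colSum G k (swapC a b A ψ) : ℤ) - colSum G k ψ := by
    have := hopt.2 (swapC a b A ψ) hproper
    have h' : (colSum G k ψ : ℤ) ≤ colSum G k (swapC a b A ψ) := by exact_mod_cast this
    linarith
  have hδ := colSum_swapC_delta hψ hab c1 c2 c3 S₀ X hS₀I hXI ha hb hS₀ne hXne c5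
  -- rule out X = S₀.image σ
  rcases eq_or_ne X (S₀.image (Equiv.swap a b)) with hXeq | hXS₀σ
  · exfalso
    rw [indI_false (by rintro rfl; exact hS₀ne hXeq : ¬ X = S₀), indI_true hXeq] at hdmX
    -- σ '' X = S₀
    have hXσS₀ : X.image (Equiv.swap a b) = S₀ := by
      rw [hXeq, fimage_swap_involution]
    have h1 : (nColorSet G ψ ↑S₀ : ℤ) ≤ cntU G ψ used ↑S₀ := by
      rw [← hXσS₀]; exact hub
    have h2 : (cntU G ψ used ↑S₀ : ℤ) = cntU G ψ used ↑X := by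
      have : (cntU G ψ used ↑X : ℤ) - cntU G ψ used ↑(X.image (Equiv.swap a b)) = 0 := by
        rw [hdmX]; ring
      rw [hXσS₀] at this
      linarith
    have h3 : (nColorSet G ψ ↑X : ℤ) = nColorSet G ψ ↑(S₀.image (Equiv.swap a b)) := by
      rw [hXeq]
    linarith
  · -- now the real case split
    rw [indI_false hXS₀σ] at hdmX
    rcases eq_or_ne X S₀ with hXS₀ | hXS₀
    · -- CASE A : X = S₀
      rw [indI_true hXS₀] at hdmX
      have hcnt2 : (cntU G ψ used ↑X : ℤ) - cntU G ψ used ↑(X.image (Equiv.swap a b)) = 2 := by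
        rw [hdmX]; ring
      have hfa : (nColorSet G ψ ↑(X.image (Equiv.swap a b)) : ℤ) ≤ nColorSet G ψ ↑X - 2 := by
        linarith
      rw [indI_true hXS₀, indI_false hXS₀σ, hXS₀] at hδ
      rw [hXS₀] at hfa
      have hEq : (colSum G k (swapC a b A ψ) : ℤ) = colSum G k ψ := by linarith
      have hfeq : (nColorSet G ψ ↑(S₀.image (Equiv.swap a b)) : ℤ)
          = nColorSet G ψ ↑S₀ - 2 := by linarith
      refine ⟨swapC a b A ψ, X, ⟨hproper, fun χ hχ => ?_⟩, hXI, hpabX, hXS₀σ,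
        Or.inl ⟨hXS₀, hfeq⟩, ?_⟩
      · have h4 := hopt.2 χ hχ
        have h5 : colSum G k (swapC a b A ψ) = colSum G k ψ := by exact_mod_cast hEq
        omega
      · intro W
        have h1 := nColorSet_swapC hψ hab c1 c2 c3 (↑W : Set ℕ)
        have h1' : (nColorSet G (swapC a b A ψ) ↑W : ℤ) + cntU G ψ used ↑W
            = (nColorSet G ψ ↑W : ℤ) + cntU G ψ used ((Equiv.swap a b) '' ↑W) := by
          exact_mod_cast h1
        have h2 := c5 ↑W
        rw [indI_iff (Finset.coe_inj (s₁ := W) (s₂ := S₀)),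
          indI_iff (Finset.coe_inj (s₁ := W) (s₂ := S₀.image (Equiv.swap a b))),
          indI_iff (Finset.coe_inj (s₁ := W) (s₂ := X)),
          indI_iff (Finset.coe_inj (s₁ := W) (s₂ := X.image (Equiv.swap a b)))] at h2
        linarith
    · -- CASE B : X ∉ {S₀, S₀σ}
      rw [indI_false hXS₀] at hdmX
      have hcnt1 : (cntU G ψ used ↑X : ℤ) - cntU G ψ used ↑(X.image (Equiv.swap a b)) = 1 := by
        rw [hdmX]; ring
      have hg : (nColorSet G ψ ↑(X.image (Equiv.swap a b)) : ℤ) ≤ nColorSet G ψ ↑X - 1 := by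
        linarith
      rw [indI_false hXS₀, indI_false hXS₀σ] at hδ
      have hEq : (colSum G k (swapC a b A ψ) : ℤ) = colSum G k ψ := by linarith
      have hfeq : (nColorSet G ψ ↑(S₀.image (Equiv.swap a b)) : ℤ) = nColorSet G ψ ↑S₀ - 1 := by
        linarith
      have hgeq : (nColorSet G ψ ↑(X.image (Equiv.swap a b)) : ℤ) = nColorSet G ψ ↑X - 1 := by
        linarith
      refine ⟨swapC a b A ψ, X, ⟨hproper, fun χ hχ => ?_⟩, hXI, hpabX, hXS₀σ,
        Or.inr ⟨hXS₀, hfeq, hgeq⟩, ?_⟩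
      · have h4 := hopt.2 χ hχ
        have h5 : colSum G k (swapC a b A ψ) = colSum G k ψ := by exact_mod_cast hEq
        omega
      · intro W
        have h1 := nColorSet_swapC hψ hab c1 c2 c3 (↑W : Set ℕ)
        have h1' : (nColorSet G (swapC a b A ψ) ↑W : ℤ) + cntU G ψ used ↑W
            = (nColorSet G ψ ↑W : ℤ) + cntU G ψ used ((Equiv.swap a b) '' ↑W) := by
          exact_mod_cast h1
        have h2 := c5 ↑W
        rw [indI_iff (Finset.coe_inj (s₁ := W) (s₂ := S₀)),
          indI_iff (Finset.coe_inj (s₁ := W) (s₂ := S₀.image (Equiv.swap a b))),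
          indI_iff (Finset.coe_inj (s₁ := W) (s₂ := X)),
          indI_iff (Finset.coe_inj (s₁ := W) (s₂ := X.image (Equiv.swap a b)))] at h2
        linarith

end Chain
end BKLS
namespace BKLS
section ChainMain

variable {V : Type*} [Fintype V] {G : SimpleGraph V} {k : ℕ} {ψ : Sym2 V → ℕ} {a b : ℕ}

lemma chain_ind (hopt : Opt G k ψ)
    (ha : a ∈ Finset.Icc 1 k) (hb : b ∈ Finset.Icc 1 k) (hab : a ≠ b)
    (S₀ : Finset ℕ) (hS₀I : S₀ ⊆ Finset.Icc 1 k) (hpabS₀ : PabF a b S₀)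
    (hf : (nColorSet G ψ ↑(S₀.image (Equiv.swap a b)) : ℤ) ≤ nColorSet G ψ ↑S₀ - 1) :
    ∀ fuel : ℕ, ∀ A : Set (Sym2 V), ∀ used : Finset V, ∀ X : Finset ℕ,
      X ⊆ Finset.Icc 1 k → PabF a b X →
      ChainInv G k ψ a b S₀ A used X →
      Fintype.card V ≤ used.card + fuel →
      ChainConc G k ψ a b S₀ := by
  classical
  have hψ := hopt.1
  intro fuel
  induction fuel with
  | zero =>
    intro A used X hXI hpabX hInv hcard
    have huniv : used = Finset.univ :=
      Finset.eq_univ_of_card used (le_antisymm (Finset.card_le_univ used) (by simpa using hcard))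
    refine chain_stuck hopt ha hb hab S₀ hS₀I hpabS₀ hf A used X hXI hpabX hInv ?_
    intro v _
    rw [huniv]; exact Finset.mem_univ v
  | succ n ih =>
    intro A used X hXI hpabX hInv hcard
    by_cases hex : ∃ u : V, u ∉ used ∧ colorSet G ψ u = ↑(X.image (Equiv.swap a b))
    · -- extension step
      obtain ⟨c1, c2, c3, c5⟩ := hInv
      obtain ⟨u, huu, hucls⟩ := hex
      have hXσI : X.image (Equiv.swap a b) ⊆ Finset.Icc 1 k :=
        fimage_swap_subset_Icc hXI ha hb
      have hXσpab : PabF a b (X.image (Equiv.swap a b)) := pabF_image hab hpabX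
      have hEPu : EndptV G ψ a b u := endptV_of_class hψ hab hucls.symm hXσpab
      obtain ⟨E', w', hcomp⟩ := exists_comp hψ hab hEPu
      have huT : Touched E' u := ((hcomp.2.2.2.2 u).mpr (Or.inl rfl)).1
      have hw'T : Touched E' w' := ((hcomp.2.2.2.2 w').mpr (Or.inr rfl)).1
      have hw'EP : EndptV G ψ a b w' := ((hcomp.2.2.2.2 w').mpr (Or.inr rfl)).2
      have huw' : u ≠ w' := hcomp.2.2.2.1
      -- E' is disjoint from A
      have hdisj : ∀ z : V, Touched E' z → ¬ Touched A z := by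
        intro z hz hzA
        have hsub : E' ⊆ A := comp_subset_closed hcomp c2 ⟨z, hz, hzA⟩
        have : Touched A u := by
          obtain ⟨e, heE, hue⟩ := huT
          exact ⟨e, hsub heE, hue⟩
        exact huu ((c3 u).mpr ⟨this, hEPu⟩)
      have hw'used : w' ∉ used := by
        intro h
        exact hdisj w' hw'T ((c3 w').mp h).1
      -- the class of w'
      obtain ⟨X', hX'I, hX'coe⟩ := exists_finset_colorSet hψ w'
      have hpabX' : PabF a b X' := class_of_endptV hψ hab hX'coe hw'EP
      -- new state
      have hmem1 : ∀ z : V, z ∈ insert w' used ↔ z = w' ∨ z ∈ used :=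
        fun z => Finset.mem_insert
      have humem : u ∉ insert w' used := by
        rw [hmem1 u]
        push_neg
        exact ⟨huw', huu⟩
      have hmem2 : ∀ z : V, z ∈ insert u (insert w' used) ↔ z = u ∨ z ∈ insert w' used :=
        fun z => Finset.mem_insert
      have htu : ∀ z : V, Touched (A ∪ E') z ↔ (Touched A z ∨ Touched E' z) := by
        intro z
        constructor
        · rintro ⟨e, (heA | heE), hze⟩
          · exact Or.inl ⟨e, heA, hze⟩
          · exact Or.inr ⟨e, heE, hze⟩
        · rintro (⟨e, heA, hze⟩ | ⟨e, heE, hze⟩)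
          · exact ⟨e, Or.inl heA, hze⟩
          · exact ⟨e, Or.inr heE, hze⟩
      refine ih (A ∪ E') (insert u (insert w' used)) X' hX'I hpabX'
        ⟨?_, ?_, ?_, ?_⟩ ?_
      · rintro e (heA | heE)
        · exact c1 e heA
        · exact hcomp.1 e heE
      · rintro e (heA | heE) f hf hadj
        · exact Or.inl (c2 e heA f hf hadj)
        · exact Or.inr (hcomp.2.1 e heE f hf hadj)
      · intro z
        rw [hmem2 z, hmem1 z, htu z]
        constructor
        · rintro (rfl | rfl | hz)
          · exact ⟨Or.inr huT, hEPu⟩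
          · exact ⟨Or.inr hw'T, hw'EP⟩
          · have := (c3 z).mp hz
            exact ⟨Or.inl this.1, this.2⟩
        · rintro ⟨hTz | hTz, hEPz⟩
          · exact Or.inr (Or.inr ((c3 z).mpr ⟨hTz, hEPz⟩))
          · rcases (hcomp.2.2.2.2 z).mp ⟨hTz, hEPz⟩ with rfl | rfl
            · exact Or.inl rfl
            · exact Or.inr (Or.inl rfl)
      · -- the counting invariant
        intro W
        have e1 := cntU_insert (G := G) (ψ := ψ) hw'used hmem1 W
        have e1σ := cntU_insert (G := G) (ψ := ψ) hw'used hmem1 ((Equiv.swap a b) '' W)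
        have e2 := cntU_insert (G := G) (ψ := ψ) humem hmem2 W
        have e2σ := cntU_insert (G := G) (ψ := ψ) humem hmem2 ((Equiv.swap a b) '' W)
        have h5 := c5 W
        rw [e2, e2σ, e1, e1σ, hucls, ← hX'coe]
        -- indicator conversions
        have k1 : indI ((↑(X.image (Equiv.swap a b)) : Set ℕ) = W)
            = indI (W = ↑(X.image (Equiv.swap a b))) := indI_iff eq_comm
        have k2 : indI ((↑(X.image (Equiv.swap a b)) : Set ℕ) = (Equiv.swap a b) '' W)
            = indI (W = ↑X) := by
          apply indI_iff
          rw [Finset.coe_image]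
          constructor
          · intro h
            have := swap_image_inj.mp h
            exact this.symm
          · rintro rfl; rfl
        have k3 : indI ((↑X' : Set ℕ) = W) = indI (W = ↑X') := indI_iff eq_comm
        have k4 : indI ((↑X' : Set ℕ) = (Equiv.swap a b) '' W)
            = indI (W = ↑(X'.image (Equiv.swap a b))) := by
          apply indI_iff
          rw [Finset.coe_image]
          constructor
          · intro h
            rw [h, swap_image_involution]
          · rintro rfl
            rw [swap_image_involution]
        rw [k1, k2, k3, k4]
        linarith [h5]
      · -- cardinality
        rw [Finset.card_insert_of_notMem humem, Finset.card_insert_of_notMem hw'used]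
        omega
    · -- stuck
      push_neg at hex
      refine chain_stuck hopt ha hb hab S₀ hS₀I hpabS₀ hf A used X hXI hpabX
        ⟨hInv.1, hInv.2.1, hInv.2.2.1, hInv.2.2.2⟩ ?_
      intro v hv
      by_contra hvu
      exact (hex v hvu) hv

/-- the main chain lemma -/
lemma chain_main (hopt : Opt G k ψ)
    (ha : a ∈ Finset.Icc 1 k) (hb : b ∈ Finset.Icc 1 k) (hab : a ≠ b)
    (S₀ : Finset ℕ) (hS₀I : S₀ ⊆ Finset.Icc 1 k) (hpabS₀ : PabF a b S₀)
    (hn : 1 ≤ nColorSet G ψ ↑S₀)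
    (hf : (nColorSet G ψ ↑(S₀.image (Equiv.swap a b)) : ℤ) ≤ nColorSet G ψ ↑S₀ - 1) :
    ChainConc G k ψ a b S₀ := by
  classical
  have hψ := hopt.1
  obtain ⟨v₀, hv₀⟩ := exists_vertex_of_nColorSet_pos hn
  have hEPv₀ : EndptV G ψ a b v₀ := endptV_of_class hψ hab hv₀.symm hpabS₀
  obtain ⟨A₀, w₁, hcomp⟩ := exists_comp hψ hab hEPv₀
  have hv₀T : Touched A₀ v₀ := ((hcomp.2.2.2.2 v₀).mpr (Or.inl rfl)).1
  have hw₁T : Touched A₀ w₁ := ((hcomp.2.2.2.2 w₁).mpr (Or.inr rfl)).1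
  have hw₁EP : EndptV G ψ a b w₁ := ((hcomp.2.2.2.2 w₁).mpr (Or.inr rfl)).2
  have hvw : v₀ ≠ w₁ := hcomp.2.2.2.1
  obtain ⟨X₁, hX₁I, hX₁coe⟩ := exists_finset_colorSet hψ w₁
  have hpabX₁ : PabF a b X₁ := class_of_endptV hψ hab hX₁coe hw₁EP
  have hmem1 : ∀ z : V, z ∈ ({w₁} : Finset V) ↔ z = w₁ ∨ z ∈ (∅ : Finset V) := by
    intro z; simp
  have hv₀mem : v₀ ∉ ({w₁} : Finset V) := by
    rw [Finset.mem_singleton]; exact hvw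
  have hmem2 : ∀ z : V, z ∈ insert v₀ ({w₁} : Finset V) ↔ z = v₀ ∨ z ∈ ({w₁} : Finset V) :=
    fun z => Finset.mem_insert
  refine chain_ind hopt ha hb hab S₀ hS₀I hpabS₀ hf (Fintype.card V) A₀
    (insert v₀ {w₁}) X₁ hX₁I hpabX₁ ⟨hcomp.1, hcomp.2.1, ?_, ?_⟩ ?_
  · intro z
    rw [hmem2 z, Finset.mem_singleton]
    constructor
    · rintro (rfl | rfl)
      · exact ⟨hv₀T, hEPv₀⟩
      · exact ⟨hw₁T, hw₁EP⟩
    · rintro ⟨hTz, hEPz⟩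
      exact (hcomp.2.2.2.2 z).mp ⟨hTz, hEPz⟩
  · intro W
    have e1 := cntU_insert (G := G) (ψ := ψ) (Finset.notMem_empty w₁) hmem1 W
    have e1σ := cntU_insert (G := G) (ψ := ψ) (Finset.notMem_empty w₁) hmem1
      ((Equiv.swap a b) '' W)
    have e2 := cntU_insert (G := G) (ψ := ψ) hv₀mem hmem2 W
    have e2σ := cntU_insert (G := G) (ψ := ψ) hv₀mem hmem2 ((Equiv.swap a b) '' W)
    rw [e2, e2σ, e1, e1σ, cntU_empty, cntU_empty, hv₀, ← hX₁coe]
    have k1 : indI ((↑S₀ : Set ℕ) = W) = indI (W = ↑S₀) := indI_iff eq_comm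
    have k2 : indI ((↑S₀ : Set ℕ) = (Equiv.swap a b) '' W)
        = indI (W = ↑(S₀.image (Equiv.swap a b))) := by
      apply indI_iff
      rw [Finset.coe_image]
      constructor
      · intro h
        rw [h, swap_image_involution]
      · rintro rfl
        rw [swap_image_involution]
    have k3 : indI ((↑X₁ : Set ℕ) = W) = indI (W = ↑X₁) := indI_iff eq_comm
    have k4 : indI ((↑X₁ : Set ℕ) = (Equiv.swap a b) '' W)
        = indI (W = ↑(X₁.image (Equiv.swap a b))) := by
      apply indI_iff
      rw [Finset.coe_image]
      constructor
      · intro h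
        rw [h, swap_image_involution]
      · rintro rfl
        rw [swap_image_involution]
    rw [k1, k2, k3, k4]
    push_cast
    ring
  · have h1 : (insert v₀ ({w₁} : Finset V)).card = 2 := by
      rw [Finset.card_insert_of_notMem hv₀mem, Finset.card_singleton]
    rw [h1]
    have := Finset.card_le_univ (insert v₀ ({w₁} : Finset V))
    omega

end ChainMain
end BKLS
namespace BKLS
section SetAlg

variable {x y : ℕ} {S T : Finset ℕ}

lemma fmem_swap_image {a b c : ℕ} {X : Finset ℕ} :
    c ∈ X.image (Equiv.swap a b) ↔ Equiv.swap a b c ∈ X := by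
  rw [Finset.mem_image]
  constructor
  · rintro ⟨d, hd, rfl⟩; rwa [Equiv.swap_apply_self]
  · intro hc; exact ⟨Equiv.swap a b c, hc, Equiv.swap_apply_self a b c⟩

/-- for x ∈ S, y ∉ S the swap image is obtained by replacing x with y -/
lemma image_swap_eq (hx : x ∈ S) (hy : y ∉ S) :
    S.image (Equiv.swap x y) = insert y (S.erase x) := by
  have hxy : x ≠ y := fun h => hy (h ▸ hx)
  ext c
  rw [fmem_swap_image, Finset.mem_insert, Finset.mem_erase]
  rcases eq_or_ne c x with rfl | hcx
  · rw [Equiv.swap_apply_left]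
    simp [hxy, hy]
  · rcases eq_or_ne c y with rfl | hcy
    · rw [Equiv.swap_apply_right]
      simp [hx]
    · rw [Equiv.swap_apply_of_ne_of_ne hcx hcy]
      simp [hcy, hcx]

lemma insert_erase_sdiff (hy : y ∈ T) :
    (insert y (S.erase x)) \ T = (S \ T).erase x := by
  ext c
  simp only [Finset.mem_sdiff, Finset.mem_insert, Finset.mem_erase]
  constructor
  · rintro ⟨rfl | ⟨hcx, hcS⟩, hcT⟩
    · exact absurd hy hcT
    · exact ⟨hcx, hcS, hcT⟩
  · rintro ⟨hcx, hcS, hcT⟩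
    exact ⟨Or.inr ⟨hcx, hcS⟩, hcT⟩

lemma sdiff_insert_erase (hx : x ∉ T) :
    T \ (insert y (S.erase x)) = (T \ S).erase y := by
  ext c
  simp only [Finset.mem_sdiff, Finset.mem_insert, Finset.mem_erase]
  constructor
  · rintro ⟨hcT, hc⟩
    push_neg at hc
    obtain ⟨hcy, hc2⟩ := hc
    refine ⟨hcy, hcT, fun hcS => ?_⟩
    rcases eq_or_ne c x with rfl | hcx
    · exact hx hcT
    · exact hc2 hcx hcS
  · rintro ⟨hcy, hcT, hcS⟩
    refine ⟨hcT, ?_⟩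
    push_neg
    exact ⟨hcy, fun _ h => hcS h⟩

lemma insert_erase_card (hx : x ∈ S) (hy : y ∉ S) :
    (insert y (S.erase x)).card = S.card := by
  have h1 : y ∉ S.erase x := fun h => hy (Finset.mem_of_mem_erase h)
  rw [Finset.card_insert_of_notMem h1, Finset.card_erase_of_mem hx]
  have := Finset.card_pos.mpr ⟨x, hx⟩
  omega

lemma swapped_sdiff_swapped (hx : x ∈ S) (hy : y ∉ S) (hyT : y ∈ T) (hxT : x ∉ T) :
    (insert y (S.erase x)) \ (insert x (T.erase y)) = insert y ((S \ T).erase x) := by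
  have hxy : x ≠ y := fun h => hy (h ▸ hx)
  ext c
  simp only [Finset.mem_sdiff, Finset.mem_insert, Finset.mem_erase]
  constructor
  · rintro ⟨h1, h2⟩
    push_neg at h2
    rcases eq_or_ne c y with rfl | hcy
    · exact Or.inl rfl
    · rcases h1 with rfl | ⟨hcx, hcS⟩
      · exact absurd rfl hcy
      · exact Or.inr ⟨hcx, hcS, h2.2 hcy⟩
  · rintro (rfl | ⟨hcx, hcS, hcT⟩)
    · refine ⟨Or.inl rfl, ?_⟩
      push_neg
      exact ⟨Ne.symm hxy, fun h => absurd rfl h⟩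
    · refine ⟨Or.inr ⟨hcx, hcS⟩, ?_⟩
      push_neg
      exact ⟨hcx, fun _ => hcT⟩

lemma sdiff_card_eq_of_card_eq (h : S.card = T.card) : (S \ T).card = (T \ S).card := by
  have h1 : (S \ T).card + (S ∩ T).card = S.card := by
    rw [Finset.card_sdiff_add_card_inter]
  have h2 : (T \ S).card + (T ∩ S).card = T.card := by
    rw [Finset.card_sdiff_add_card_inter]
  rw [Finset.inter_comm] at h2
  omega

lemma eq_of_sdiff_empty (h : (S \ T).card = 0) (hc : S.card = T.card) : S = T := by
  have h1 : S \ T = ∅ := Finset.card_eq_zero.mp h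
  have h2 : S ⊆ T := by
    intro c hcS
    by_contra hcT
    have : c ∈ S \ T := Finset.mem_sdiff.mpr ⟨hcS, hcT⟩
    rw [h1] at this
    exact absurd this (Finset.notMem_empty c)
  exact Finset.eq_of_subset_of_card_le h2 (le_of_eq hc.symm)

lemma eq_insert_erase_of_sdiffs (h1 : S \ T = {x}) (h2 : T \ S = {y}) :
    T = insert y (S.erase x) := by
  have hxS : x ∈ S := (Finset.mem_sdiff.mp (h1 ▸ Finset.mem_singleton_self x)).1
  have hxT : x ∉ T := (Finset.mem_sdiff.mp (h1 ▸ Finset.mem_singleton_self x)).2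
  have hyT : y ∈ T := (Finset.mem_sdiff.mp (h2 ▸ Finset.mem_singleton_self y)).1
  have hyS : y ∉ S := (Finset.mem_sdiff.mp (h2 ▸ Finset.mem_singleton_self y)).2
  ext c
  rw [Finset.mem_insert, Finset.mem_erase]
  constructor
  · intro hcT
    rcases eq_or_ne c y with rfl | hcy
    · exact Or.inl rfl
    · right
      have hcS : c ∈ S := by
        by_contra hcS
        have : c ∈ T \ S := Finset.mem_sdiff.mpr ⟨hcT, hcS⟩
        rw [h2, Finset.mem_singleton] at this
        exact hcy this
      exact ⟨fun h => hxT (h ▸ hcT), hcS⟩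
  · rintro (rfl | ⟨hcx, hcS⟩)
    · exact hyT
    · by_contra hcT
      have : c ∈ S \ T := Finset.mem_sdiff.mpr ⟨hcS, hcT⟩
      rw [h1, Finset.mem_singleton] at this
      exact hcx this

lemma insert_erase_subset_Icc {k : ℕ} (hS : S ⊆ Finset.Icc 1 k) (hy : y ∈ Finset.Icc 1 k) :
    insert y (S.erase x) ⊆ Finset.Icc 1 k := by
  intro c hc
  rcases Finset.mem_insert.mp hc with rfl | hc
  · exact hy
  · exact hS (Finset.mem_of_mem_erase hc)

lemma sdiff_swap_self (hx : x ∈ S) (hy : y ∉ S) :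
    S \ (insert y (S.erase x)) = {x} := by
  have hxy : x ≠ y := fun h => hy (h ▸ hx)
  ext c
  simp only [Finset.mem_sdiff, Finset.mem_insert, Finset.mem_erase, Finset.mem_singleton]
  constructor
  · rintro ⟨hcS, hc⟩
    push_neg at hc
    by_contra hcx
    exact (hc.2 hcx) hcS
  · rintro rfl
    refine ⟨hx, ?_⟩
    push_neg
    exact ⟨hxy, fun h => absurd rfl h⟩

lemma insert_erase_sdiff_self (hx : x ∈ S) (hy : y ∉ S) :
    (insert y (S.erase x)) \ S = {y} := by
  ext c
  simp only [Finset.mem_sdiff, Finset.mem_insert, Finset.mem_erase, Finset.mem_singleton]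
  constructor
  · rintro ⟨rfl | ⟨hcx, hcS⟩, hc⟩
    · rfl
    · exact absurd hcS hc
  · rintro rfl
    exact ⟨Or.inl rfl, hy⟩

lemma ne_of_mem_not_mem {c : ℕ} (hc : c ∈ S) (hc' : c ∉ T) : S ≠ T :=
  fun h => hc' (h ▸ hc)

lemma ne_of_sdiff_card_pos (h : 0 < (S \ T).card) : S ≠ T := by
  intro he
  rw [he, Finset.sdiff_self] at h
  simp at h

end SetAlg
end BKLS
namespace BKLS
section Main

variable {V : Type*} [Fintype V] {G : SimpleGraph V} {k : ℕ}

lemma main_false (m : ℕ) :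
    ∀ ψ : Sym2 V → ℕ, Opt G k ψ → ∀ S T : Finset ℕ,
      S ⊆ Finset.Icc 1 k → T ⊆ Finset.Icc 1 k → S.card = T.card →
      (S \ T).card = m →
      (nColorSet G ψ ↑T : ℤ) ≤ (nColorSet G ψ ↑S : ℤ) - 3 → False := by
  induction m using Nat.strong_induction_on with
  | _ m ih =>
  intro ψ hopt S T hSI hTI hcard hm hgap
  -- the ≤-form of the induction hypothesis
  have ihA : ∀ m' : ℕ, m' < m → ∀ ψ' : Sym2 V → ℕ, Opt G k ψ' → ∀ S' T' : Finset ℕ,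
      S' ⊆ Finset.Icc 1 k → T' ⊆ Finset.Icc 1 k → S'.card = T'.card →
      (S' \ T').card ≤ m' →
      (nColorSet G ψ' ↑S' : ℤ) ≤ (nColorSet G ψ' ↑T' : ℤ) + 2 := by
    intro m' hm' ψ' hopt' S' T' hS'I hT'I hcard' hle
    by_contra hcon
    push_neg at hcon
    exact ih (S' \ T').card (lt_of_le_of_lt hle hm') ψ' hopt' S' T' hS'I hT'I hcard' rfl
      (by linarith)
  -- basic positivity
  have hTnn : (0 : ℤ) ≤ (nColorSet G ψ ↑T : ℤ) := Int.natCast_nonneg _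
  have hn : 1 ≤ nColorSet G ψ ↑S := by
    have : (1 : ℤ) ≤ (nColorSet G ψ ↑S : ℤ) := by linarith
    exact_mod_cast this
  -- m = 0 impossible
  rcases Nat.eq_zero_or_pos m with rfl | hm1
  · have : S = T := eq_of_sdiff_empty hm hcard
    rw [this] at hgap
    linarith
  -- m = 1 : directly by the chain lemma
  have hTSm : (T \ S).card = m := by rw [← sdiff_card_eq_of_card_eq hcard, hm]
  rcases eq_or_lt_of_le (show 1 ≤ m from hm1) with hm1' | hm2
  · -- m = 1
    obtain ⟨x, hx⟩ := Finset.card_eq_one.mp (by rw [hm, ← hm1'])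
    obtain ⟨y, hy⟩ := Finset.card_eq_one.mp (by rw [hTSm, ← hm1'])
    have hxS : x ∈ S := (Finset.mem_sdiff.mp (hx ▸ Finset.mem_singleton_self x)).1
    have hyT : y ∈ T := (Finset.mem_sdiff.mp (hy ▸ Finset.mem_singleton_self y)).1
    have hyS : y ∉ S := (Finset.mem_sdiff.mp (hy ▸ Finset.mem_singleton_self y)).2
    have hTeq : T = insert y (S.erase x) := eq_insert_erase_of_sdiffs hx hy
    have himg : S.image (Equiv.swap x y) = T := by
      rw [image_swap_eq hxS hyS, hTeq]
    have hxy : x ≠ y := fun h => hyS (h ▸ hxS)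
    have hxI : x ∈ Finset.Icc 1 k := hSI hxS
    have hyI : y ∈ Finset.Icc 1 k := hTI hyT
    have hf : (nColorSet G ψ ↑(S.image (Equiv.swap x y)) : ℤ)
        ≤ (nColorSet G ψ ↑S : ℤ) - 1 := by
      rw [himg]; linarith
    obtain ⟨ψ', X, -, -, -, -, hcase, -⟩ :=
      chain_main (a := x) (b := y) hopt hxI hyI hxy S hSI (Or.inl ⟨hxS, hyS⟩) hn hf
    rcases hcase with ⟨-, h2⟩ | ⟨-, h2, -⟩
    · rw [himg] at h2; linarith
    · rw [himg] at h2; linarith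
  · -- m ≥ 2 : inner induction on the distance of the punch class
    have hINNER : ∀ d : ℕ, ∀ ψ : Sym2 V → ℕ, Opt G k ψ → ∀ S T T₀ : Finset ℕ,
        S ⊆ Finset.Icc 1 k → T ⊆ Finset.Icc 1 k → T₀ ⊆ Finset.Icc 1 k →
        S.card = T.card → (S \ T).card = m → S.card = T₀.card →
        S \ T₀ ⊆ S \ T → T₀ \ S ⊆ T \ S → (S \ T₀).card = d + 1 →
        (nColorSet G ψ ↑T : ℤ) ≤ (nColorSet G ψ ↑S : ℤ) - 3 →
        (nColorSet G ψ ↑T₀ : ℤ) ≤ (nColorSet G ψ ↑S : ℤ) - 2 → False := by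
      intro d
      induction d using Nat.strong_induction_on with
      | _ d ihd =>
      intro ψa hoptψ Sa Ta T₀ hSaI hTaI hT₀I hcardST hmST hcardST₀ hsub1 hsub2 hcardd
        hgap3 hpunch
      have hT₀Sd : (T₀ \ Sa).card = d + 1 := by
        rw [← sdiff_card_eq_of_card_eq hcardST₀, hcardd]
      have hTaSm : (Ta \ Sa).card = m := by
        rw [← sdiff_card_eq_of_card_eq hcardST, hmST]
      have hTann : (0 : ℤ) ≤ (nColorSet G ψa ↑Ta : ℤ) := Int.natCast_nonneg _
      have hna : 1 ≤ nColorSet G ψa ↑Sa := by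
        have : (1 : ℤ) ≤ (nColorSet G ψa ↑Sa : ℤ) := by linarith
        exact_mod_cast this
      have hSTane : Sa ≠ Ta := ne_of_sdiff_card_pos (by omega)
      rcases Nat.eq_zero_or_pos d with rfl | hd
      · -- BASE : (Sa \ T₀).card = 1
        obtain ⟨x, hx⟩ := Finset.card_eq_one.mp hcardd
        obtain ⟨y, hy⟩ := Finset.card_eq_one.mp hT₀Sd
        have hxmem : x ∈ Sa \ T₀ := hx ▸ Finset.mem_singleton_self x
        have hymem : y ∈ T₀ \ Sa := hy ▸ Finset.mem_singleton_self y
        have hxS : x ∈ Sa := (Finset.mem_sdiff.mp hxmem).1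
        have hxT₀ : x ∉ T₀ := (Finset.mem_sdiff.mp hxmem).2
        have hyT₀ : y ∈ T₀ := (Finset.mem_sdiff.mp hymem).1
        have hySa : y ∉ Sa := (Finset.mem_sdiff.mp hymem).2
        have hxTa : x ∉ Ta := (Finset.mem_sdiff.mp (hsub1 hxmem)).2
        have hyTa : y ∈ Ta := (Finset.mem_sdiff.mp (hsub2 hymem)).1
        have hT₀eq : T₀ = insert y (Sa.erase x) := eq_insert_erase_of_sdiffs hx hy
        have himg : Sa.image (Equiv.swap x y) = T₀ := by
          rw [image_swap_eq hxS hySa, hT₀eq]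
        have hxy : x ≠ y := fun h => hySa (h ▸ hxS)
        have hxI : x ∈ Finset.Icc 1 k := hSaI hxS
        have hyI : y ∈ Finset.Icc 1 k := hTaI hyTa
        have hf : (nColorSet G ψa ↑(Sa.image (Equiv.swap x y)) : ℤ)
            ≤ (nColorSet G ψa ↑Sa : ℤ) - 1 := by rw [himg]; linarith
        obtain ⟨ψ'', X, hopt'', hXI, hpabX, hXneσ, hcase, hform⟩ :=
          chain_main (a := x) (b := y) hoptψ hxI hyI hxy Sa hSaI (Or.inl ⟨hxS, hySa⟩) hna hf
        rcases hcase with ⟨hXS, h2⟩ | ⟨-, h2, -⟩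
        · -- CASE A
          rw [himg] at h2
          have hT₀Sne : T₀ ≠ Sa := ne_of_mem_not_mem hyT₀ hySa
          have hT₀Ta : T₀ ≠ Ta := by
            intro h
            rw [h] at hcardd
            omega
          rw [hXS, himg] at hform
          have e1 := hform T₀
          rw [indI_false hT₀Sne, indI_true (rfl : T₀ = T₀)] at e1
          have e2 := hform Ta
          rw [indI_false (Ne.symm hSTane), indI_false (Ne.symm hT₀Ta)] at e2
          have hle : (T₀ \ Ta).card ≤ m - 1 := by
            rw [hT₀eq, insert_erase_sdiff hyTa,
              Finset.card_erase_of_mem (Finset.mem_sdiff.mpr ⟨hxS, hxTa⟩), hmST]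
          have hres := ihA (m - 1) (by omega) ψ'' hopt'' T₀ Ta hT₀I hTaI
            (hcardST₀.symm.trans hcardST) hle
          rw [e1, e2] at hres
          linarith
        · -- CASE B : immediate numeric contradiction
          rw [himg] at h2
          linarith
      · -- STEP : d ≥ 1
        obtain ⟨x, hxmem⟩ := Finset.card_pos.mp (show 0 < (Sa \ T₀).card by omega)
        obtain ⟨y, hymem⟩ := Finset.card_pos.mp (show 0 < (T₀ \ Sa).card by omega)
        have hxS : x ∈ Sa := (Finset.mem_sdiff.mp hxmem).1
        have hxT₀ : x ∉ T₀ := (Finset.mem_sdiff.mp hxmem).2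
        have hyT₀ : y ∈ T₀ := (Finset.mem_sdiff.mp hymem).1
        have hySa : y ∉ Sa := (Finset.mem_sdiff.mp hymem).2
        have hxTa : x ∉ Ta := (Finset.mem_sdiff.mp (hsub1 hxmem)).2
        have hyTa : y ∈ Ta := (Finset.mem_sdiff.mp (hsub2 hymem)).1
        have hxy : x ≠ y := fun h => hySa (h ▸ hxS)
        have hxI : x ∈ Finset.Icc 1 k := hSaI hxS
        have hyI : y ∈ Finset.Icc 1 k := hTaI hyTa
        have himgS : Sa.image (Equiv.swap x y) = insert y (Sa.erase x) :=
          image_swap_eq hxS hySa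
        have hS1I : insert y (Sa.erase x) ⊆ Finset.Icc 1 k :=
          insert_erase_subset_Icc hSaI hyI
        have hS1card : (insert y (Sa.erase x)).card = Sa.card := insert_erase_card hxS hySa
        have hxSTa : x ∈ Sa \ Ta := Finset.mem_sdiff.mpr ⟨hxS, hxTa⟩
        have hS1Tm : ((insert y (Sa.erase x)) \ Ta).card = m - 1 := by
          rw [insert_erase_sdiff hyTa, Finset.card_erase_of_mem hxSTa, hmST]
        have hS1le0 := ihA (m - 1) (by omega) ψa hoptψ (insert y (Sa.erase x)) Ta hS1I hTaI
          (hS1card.trans hcardST) (le_of_eq hS1Tm)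
        have hS1le : (nColorSet G ψa ↑(insert y (Sa.erase x)) : ℤ)
            ≤ (nColorSet G ψa ↑Sa : ℤ) - 1 := by linarith
        by_cases hp : (nColorSet G ψa ↑(insert y (Sa.erase x)) : ℤ)
            ≤ (nColorSet G ψa ↑Sa : ℤ) - 2
        · -- punch at distance 1
          refine ihd 0 (by omega) ψa hoptψ Sa Ta (insert y (Sa.erase x)) hSaI hTaI hS1I
            hcardST hmST hS1card.symm ?_ ?_ ?_ hgap3 hp
          · rw [sdiff_swap_self hxS hySa]
            exact Finset.singleton_subset_iff.mpr hxSTa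
          · rw [insert_erase_sdiff_self hxS hySa]
            exact Finset.singleton_subset_iff.mpr (hsub2 hymem)
          · rw [sdiff_swap_self hxS hySa]
            simp
        · push_neg at hp
          have hS1eq : (nColorSet G ψa ↑(insert y (Sa.erase x)) : ℤ)
              = (nColorSet G ψa ↑Sa : ℤ) - 1 := by linarith
          have hf : (nColorSet G ψa ↑(Sa.image (Equiv.swap x y)) : ℤ)
              ≤ (nColorSet G ψa ↑Sa : ℤ) - 1 := by rw [himgS]; linarith
          obtain ⟨ψ'', X, hopt'', hXI, hpabX, hXneσ, hcase, hform⟩ :=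
            chain_main (a := x) (b := y) hoptψ hxI hyI hxy Sa hSaI (Or.inl ⟨hxS, hySa⟩) hna hf
          rcases hcase with ⟨hXS, h2⟩ | ⟨hXS, h2, h3⟩
          · rw [himgS] at h2
            linarith
          · -- CASE B
            rw [himgS] at hXneσ
            have himgT : Ta.image (Equiv.swap x y) = insert x (Ta.erase y) := by
              rw [Equiv.swap_comm]
              exact image_swap_eq hyTa hxTa
            have hS1Sa : insert y (Sa.erase x) ≠ Sa :=
              ne_of_mem_not_mem (Finset.mem_insert_self y _) hySa
            have hS1Ta : insert y (Sa.erase x) ≠ Ta := ne_of_sdiff_card_pos (by omega)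
            have hynT1 : y ∉ insert x (Ta.erase y) := by
              rw [Finset.mem_insert]
              push_neg
              exact ⟨fun h => hxy h.symm, Finset.notMem_erase y Ta⟩
            have hS1T1 : insert y (Sa.erase x) ≠ insert x (Ta.erase y) :=
              ne_of_mem_not_mem (Finset.mem_insert_self y _) hynT1
            have hSaT1sd : Sa \ (insert x (Ta.erase y)) = (Sa \ Ta).erase x :=
              sdiff_insert_erase hySa
            have hSaT1 : Sa ≠ insert x (Ta.erase y) := by
              apply ne_of_sdiff_card_pos
              rw [hSaT1sd, Finset.card_erase_of_mem hxSTa, hmST]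
              omega
            have hT1Ta : insert x (Ta.erase y) ≠ Ta :=
              ne_of_mem_not_mem (Finset.mem_insert_self x _) hxTa
            by_cases hXT : X = Ta
            · rw [himgS, hXT, himgT] at hform
              have e1 := hform (insert y (Sa.erase x))
              rw [indI_false hS1Sa, indI_true (rfl : insert y (Sa.erase x) = _),
                indI_false hS1Ta, indI_false hS1T1] at e1
              have e2 := hform Ta
              rw [indI_false (Ne.symm hSTane), indI_false (Ne.symm hS1Ta),
                indI_true (rfl : Ta = Ta), indI_false (Ne.symm hT1Ta)] at e2
              have hres := ihA (m - 1) (by omega) ψ'' hopt'' (insert y (Sa.erase x)) Ta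
                hS1I hTaI (hS1card.trans hcardST) (le_of_eq hS1Tm)
              rw [e1, e2] at hres
              linarith
            · by_cases hXT1 : X = insert x (Ta.erase y)
              · -- recursion
                have hXimg : X.image (Equiv.swap x y) = Ta := by
                  rw [hXT1, ← himgT, fimage_swap_involution]
                rw [himgS, hXimg, hXT1] at hform
                rw [hXimg, hXT1] at h3
                have e1 := hform (insert y (Sa.erase x))
                rw [indI_false hS1Sa, indI_true (rfl : insert y (Sa.erase x) = _),
                  indI_false hS1T1, indI_false hS1Ta] at e1
                have e2 := hform (insert x (Ta.erase y))
                rw [indI_false (Ne.symm hSaT1), indI_false (Ne.symm hS1T1),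
                  indI_true (rfl : insert x (Ta.erase y) = _), indI_false hT1Ta] at e2
                have hT₀Sane : T₀ ≠ Sa := ne_of_mem_not_mem hyT₀ hySa
                have hS1T₀sd : (insert y (Sa.erase x)) \ T₀ = (Sa \ T₀).erase x :=
                  insert_erase_sdiff hyT₀
                have hS1T₀ : insert y (Sa.erase x) ≠ T₀ := by
                  apply ne_of_sdiff_card_pos
                  rw [hS1T₀sd, Finset.card_erase_of_mem hxmem, hcardd]
                  omega
                have hT1T₀ : insert x (Ta.erase y) ≠ T₀ :=
                  ne_of_mem_not_mem (Finset.mem_insert_self x _) hxT₀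
                have e3 := hform T₀
                rw [indI_false hT₀Sane, indI_false (Ne.symm hS1T₀),
                  indI_false (Ne.symm hT1T₀)] at e3
                have hbound : (nColorSet G ψ'' ↑T₀ : ℤ)
                    ≤ (nColorSet G ψa ↑Sa : ℤ) - 2 := by
                  rcases eq_or_ne T₀ Ta with h | h
                  · rw [indI_true h] at e3
                    have hTT : (nColorSet G ψa ↑T₀ : ℤ) = nColorSet G ψa ↑Ta := by rw [h]
                    linarith
                  · rw [indI_false h] at e3
                    linarith
                have hT1I : insert x (Ta.erase y) ⊆ Finset.Icc 1 k :=
                  insert_erase_subset_Icc hTaI hxI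
                have hT1card : (insert x (Ta.erase y)).card = Ta.card :=
                  insert_erase_card hyTa hxTa
                have hswsd : (insert y (Sa.erase x)) \ (insert x (Ta.erase y))
                    = insert y ((Sa \ Ta).erase x) :=
                  swapped_sdiff_swapped hxS hySa hyTa hxTa
                have hswsd2 : (insert x (Ta.erase y)) \ (insert y (Sa.erase x))
                    = insert x ((Ta \ Sa).erase y) :=
                  swapped_sdiff_swapped hyTa hxTa hxS hySa
                have hynotst : y ∉ (Sa \ Ta).erase x :=
                  fun h => hySa (Finset.mem_sdiff.mp (Finset.mem_of_mem_erase h)).1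
                refine ihd (d - 1) (by omega) ψ'' hopt'' (insert y (Sa.erase x))
                  (insert x (Ta.erase y)) T₀ hS1I hT1I hT₀I
                  (hS1card.trans (hcardST.trans hT1card.symm)) ?_
                  (hS1card.trans hcardST₀) ?_ ?_ ?_ ?_ ?_
                · rw [hswsd, Finset.card_insert_of_notMem hynotst,
                    Finset.card_erase_of_mem hxSTa, hmST]
                  omega
                · rw [hS1T₀sd, hswsd]
                  intro c hc
                  obtain ⟨hcx, hcST₀⟩ := Finset.mem_erase.mp hc
                  exact Finset.mem_insert.mpr
                    (Or.inr (Finset.mem_erase.mpr ⟨hcx, hsub1 hcST₀⟩))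
                · rw [sdiff_insert_erase hxT₀, hswsd2]
                  intro c hc
                  obtain ⟨hcy, hcT₀S⟩ := Finset.mem_erase.mp hc
                  exact Finset.mem_insert.mpr
                    (Or.inr (Finset.mem_erase.mpr ⟨hcy, hsub2 hcT₀S⟩))
                · rw [hS1T₀sd, Finset.card_erase_of_mem hxmem, hcardd]
                  omega
                · rw [e1, e2]
                  linarith
                · linarith [hbound, e1, hS1eq]
              · -- X away from everything
                rw [himgS] at hform
                have hS1X : insert y (Sa.erase x) ≠ X := Ne.symm hXneσ
                have hS1Xσ : insert y (Sa.erase x) ≠ X.image (Equiv.swap x y) := by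
                  intro h
                  apply hXS
                  have : X = (X.image (Equiv.swap x y)).image (Equiv.swap x y) :=
                    (fimage_swap_involution X).symm
                  rw [this, ← h, ← himgS, fimage_swap_involution]
                have e1 := hform (insert y (Sa.erase x))
                rw [indI_false hS1Sa, indI_true (rfl : insert y (Sa.erase x) = _),
                  indI_false hS1X, indI_false hS1Xσ] at e1
                have hTaX : Ta ≠ X := Ne.symm hXT
                have hTaXσ : Ta ≠ X.image (Equiv.swap x y) := by
                  intro h
                  apply hXT1
                  have : X = (X.image (Equiv.swap x y)).image (Equiv.swap x y) :=
                    (fimage_swap_involution X).symm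
                  rw [this, ← h, himgT]
                have e2 := hform Ta
                rw [indI_false (Ne.symm hSTane), indI_false (Ne.symm hS1Ta),
                  indI_false hTaX, indI_false hTaXσ] at e2
                have hres := ihA (m - 1) (by omega) ψ'' hopt'' (insert y (Sa.erase x)) Ta
                  hS1I hTaI (hS1card.trans hcardST) (le_of_eq hS1Tm)
                rw [e1, e2] at hres
                linarith

    exact hINNER (m - 1) ψ hopt S T T hSI hTI hTI hcard hm hcard
      (le_refl _) (le_refl _) (by omega) hgap (by linarith)

end Main
end BKLS

/-- Theorem (Balister–Kostochka–Li–Schelp): in any optimal edge-`k`-coloring `φ` of `G`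
(with `k ≥ χ'(G)`), `|n_φ^S − n_φ^{S'}| ≤ 2` for all `S, S' ⊆ {1,…,k}` with `|S| = |S'|`. -/
theorem optimal_coloring_balanced {V : Type*} [Fintype V]
    (G : SimpleGraph V) (k : ℕ) (hk : edgeChromaticIndex G ≤ k)
    (φ : Sym2 V → ℕ) (hφ : IsEdgeKColoring G k φ)
    (hopt : ∀ φ' : Sym2 V → ℕ, IsEdgeKColoring G k φ' → colSum G k φ ≤ colSum G k φ')
    (S S' : Finset ℕ) (hS : S ⊆ Finset.Icc 1 k) (hS' : S' ⊆ Finset.Icc 1 k)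
    (hcard : S.card = S'.card) :
    |(nColorSet G φ (↑S : Set ℕ) : ℤ) - (nColorSet G φ (↑S' : Set ℕ) : ℤ)| ≤ 2 := by
  have hOpt : BKLS.Opt G k φ := ⟨hφ, hopt⟩
  rw [abs_le]
  constructor
  · by_contra hcon
    push_neg at hcon
    exact BKLS.main_false (S' \ S).card φ hOpt S' S hS' hS hcard.symm rfl (by linarith)
  · by_contra hcon
    push_neg at hcon
    exact BKLS.main_false (S \ S').card φ hOpt S S' hS hS' hcard rfl (by linarith)
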